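/- arXiv:2005.09680 — 4 statements merged into one kernel-verified Lean document; each statement's English description precedes it below -/
import Mathlib

section
/- There exist finite-dimensional real representations U and V of N_{pq²} such that: (1) U and V are not isomorphic; (2) for every subgroup P ≤ N_{pq²} of prime power order, the restrictions of U and V to P are isomorphic (U and V are P-matched); (3) both U and V satisfy the weak gap condition; and (4) dim U^L = dim V^L = 0 for every subgroup L of N_{pq²} containing ⟨a^q⟩. In particular, PO_w^L(N_{pq²}) ≠ 0. -/
open Multiplicative

namespace Mizerka

/-- The standing hypotheses: `p` and `q` are odd primes with `q ∣ p - 1`, and `i` is a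
natural number with `i ≡ 1 (mod q)` whose multiplicative order modulo `p` equals `q`. -/
structure Hyp (p q i : ℕ) : Prop where
  hp : Nat.Prime p
  hq : Nat.Prime q
  hoddp : Odd p
  hoddq : Odd q
  hdvd : q ∣ p - 1
  hmod : i ≡ 1 [MOD q]
  hord : orderOf (i : ZMod p) = q

namespace Hyp

variable {p q i : ℕ}

theorem coprime_q (h : Hyp p q i) : Nat.Coprime i q := by
  have h1 : i % q = 1 % q := h.hmod
  unfold Nat.Coprime
  rw [Nat.gcd_comm, Nat.gcd_rec, h1, ← Nat.gcd_rec, Nat.gcd_one_right]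

theorem coprime_p (h : Hyp p q i) : Nat.Coprime i p := by
  haveI : NeZero p := ⟨h.hp.ne_zero⟩
  have hq1 : q - 1 + 1 = q := Nat.succ_pred_eq_of_pos h.hq.pos
  have hmul : (i : ZMod p) * (i : ZMod p) ^ (q - 1) = 1 := by
    rw [← pow_succ', hq1, ← h.hord, pow_orderOf_eq_one]
  exact (ZMod.isUnit_iff_coprime i p).mp (isUnit_iff_exists_inv.mpr ⟨_, hmul⟩)

theorem coprime (h : Hyp p q i) : Nat.Coprime i (p * q) :=
  Nat.Coprime.mul_right h.coprime_p h.coprime_q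

theorem pow_q_modeq (h : Hyp p q i) : i ^ q ≡ 1 [MOD p * q] := by
  have hpq : p ≠ q := by
    have h1 : 0 < p - 1 := by have := h.hp.two_le; omega
    have := Nat.le_of_dvd h1 h.hdvd
    omega
  have hc : Nat.Coprime p q := (Nat.coprime_primes h.hp h.hq).mpr hpq
  rw [← Nat.modEq_and_modEq_iff_modEq_mul hc]
  constructor
  · haveI : NeZero p := ⟨h.hp.ne_zero⟩
    have hcast : ((i ^ q : ℕ) : ZMod p) = ((1 : ℕ) : ZMod p) := by
      push_cast
      rw [← h.hord, pow_orderOf_eq_one]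
    exact (ZMod.natCast_eq_natCast_iff _ _ _).mp hcast
  · calc i ^ q ≡ 1 ^ q [MOD q] := h.hmod.pow q
      _ = 1 := one_pow q

/-- The unit of `ZMod (p*q)` determined by `i`. -/
def unit (h : Hyp p q i) : (ZMod (p * q))ˣ := ZMod.unitOfCoprime i h.coprime

/-- The unit of `ZMod p` determined by `i`. -/
def unitP (h : Hyp p q i) : (ZMod p)ˣ := ZMod.unitOfCoprime i h.coprime_p

theorem unit_pow (h : Hyp p q i) : h.unit ^ q = 1 := by
  apply Units.ext
  have h2 : ((i ^ q : ℕ) : ZMod (p * q)) = ((1 : ℕ) : ZMod (p * q)) :=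
    (ZMod.natCast_eq_natCast_iff _ _ _).mpr h.pow_q_modeq
  push_cast at h2
  simpa [Hyp.unit] using h2

theorem unitP_pow (h : Hyp p q i) : h.unitP ^ q = 1 := by
  apply Units.ext
  have h2 : (i : ZMod p) ^ q = 1 := by rw [← h.hord]; exact pow_orderOf_eq_one _
  simpa [Hyp.unitP] using h2

end Hyp

/-- Multiplication by a unit, as an automorphism of the (multiplicatively written)
cyclic group `ZMod n`. -/
def zmodMulAut (n : ℕ) : (ZMod n)ˣ →* MulAut (Multiplicative (ZMod n)) where
  toFun u :=
    { toFun := fun x => ofAdd ((u : ZMod n) * x.toAdd)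
      invFun := fun x => ofAdd (((u⁻¹ : (ZMod n)ˣ) : ZMod n) * x.toAdd)
      left_inv := fun x => by simp
      right_inv := fun x => by simp
      map_mul' := fun x y => by simp [mul_add, ← ofAdd_add] }
  map_one' := by ext x; simp
  map_mul' u v := by ext x; simp [mul_assoc]

/-- The function underlying the automorphism of the dihedral group induced by
multiplication by a unit on the rotation part. -/
def dihedralAutFun (n : ℕ) (u : (ZMod n)ˣ) : DihedralGroup n → DihedralGroup n
  | .r j => .r ((u : ZMod n) * j)
  | .sr j => .sr ((u : ZMod n) * j)

/-- Multiplication of indices by a unit, as an automorphism of the dihedral group: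
`a ↦ a^u`, `b ↦ b`. -/
def dihedralAut (n : ℕ) : (ZMod n)ˣ →* MulAut (DihedralGroup n) where
  toFun u :=
    { toFun := dihedralAutFun n u
      invFun := dihedralAutFun n u⁻¹
      left_inv := fun x => by cases x <;> simp [dihedralAutFun]
      right_inv := fun x => by cases x <;> simp [dihedralAutFun]
      map_mul' := fun x y => by cases x <;> cases y <;> simp [dihedralAutFun, mul_add, mul_sub] }
  map_one' := by ext x; cases x <;> simp [dihedralAutFun]
  map_mul' u v := by ext x; cases x <;> simp [dihedralAutFun, mul_assoc]

/-- The homomorphism `ZMod q →* G` (written multiplicatively) sending `1` to a fixed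
element `g` with `g ^ q = 1`. -/
def zmodPow {G : Type*} [Group G] (q : ℕ) [NeZero q] (g : G) (hg : g ^ q = 1) :
    Multiplicative (ZMod q) →* G where
  toFun x := g ^ (toAdd x).val
  map_one' := by
    show g ^ (toAdd (1 : Multiplicative (ZMod q))).val = 1
    rw [toAdd_one, ZMod.val_zero, pow_zero]
  map_mul' x y := by
    have key : ∀ m : ℕ, g ^ (m % q) = g ^ m := fun m => by
      conv_rhs => rw [← Nat.div_add_mod m q]
      rw [pow_add, pow_mul, hg, one_pow, one_mul]
    show g ^ (toAdd (x * y)).val = g ^ (toAdd x).val * g ^ (toAdd y).val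
    rw [toAdd_mul, ZMod.val_add, key, pow_add]

namespace Hyp

variable {p q i : ℕ}

/-- The action of `C_q` on `C_{pq}` sending the generator to multiplication by `i`. -/
def phiN (h : Hyp p q i) : Multiplicative (ZMod q) →* MulAut (Multiplicative (ZMod (p * q))) :=
  haveI : NeZero q := ⟨h.hq.ne_zero⟩
  zmodPow q (zmodMulAut (p * q) h.unit) (by rw [← map_pow, h.unit_pow, map_one])

/-- The action of `C_q` on `D_{2pq}` sending the generator to `τ` (`τ(a) = a^i`, `τ(b) = b`). -/
def phiG (h : Hyp p q i) : Multiplicative (ZMod q) →* MulAut (DihedralGroup (p * q)) :=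
  haveI : NeZero q := ⟨h.hq.ne_zero⟩
  zmodPow q (dihedralAut (p * q) h.unit) (by rw [← map_pow, h.unit_pow, map_one])

/-- The action of `C_q` on `C_p` sending the generator to multiplication by `i`. -/
def phiF (h : Hyp p q i) : Multiplicative (ZMod q) →* MulAut (Multiplicative (ZMod p)) :=
  haveI : NeZero q := ⟨h.hq.ne_zero⟩
  zmodPow q (zmodMulAut p h.unitP) (by rw [← map_pow, h.unitP_pow, map_one])

end Hyp

/-- The group `N_{pq²} = ⟨a, c ∣ a^{pq} = c^q = 1, c a c⁻¹ = a^i⟩ = C_{pq} ⋊ C_q`. -/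
abbrev Npq2 {p q i : ℕ} (h : Hyp p q i) : Type :=
  Multiplicative (ZMod (p * q)) ⋊[h.phiN] Multiplicative (ZMod q)

/-- The group `G_{p,q} = D_{2pq} ⋊_φ C_q`. -/
abbrev Gpq {p q i : ℕ} (h : Hyp p q i) : Type :=
  DihedralGroup (p * q) ⋊[h.phiG] Multiplicative (ZMod q)

/-- The Frobenius group `F_{p,q} = C_p ⋊ C_q` (the nonabelian group of order `pq`). -/
abbrev Fpq {p q i : ℕ} (h : Hyp p q i) : Type :=
  Multiplicative (ZMod p) ⋊[h.phiF] Multiplicative (ZMod q)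

variable {p q i : ℕ}

/-- The generator `a` of `N_{pq²}`. -/
def aN (h : Hyp p q i) : Npq2 h := SemidirectProduct.inl (ofAdd 1)

/-- The generator `c` of `N_{pq²}`. -/
def cN (h : Hyp p q i) : Npq2 h := SemidirectProduct.inr (ofAdd 1)

/-- The generator `a` of `G_{p,q}`. -/
def aG (h : Hyp p q i) : Gpq h := SemidirectProduct.inl (DihedralGroup.r 1)

/-- The generator `b` of `G_{p,q}`. -/
def bG (h : Hyp p q i) : Gpq h := SemidirectProduct.inl (DihedralGroup.sr 0)

/-- The generator `c` of `G_{p,q}`. -/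
def cG (h : Hyp p q i) : Gpq h := SemidirectProduct.inr (ofAdd 1)

/-- The real conjugacy class `(g)^± = (g) ∪ (g⁻¹)`. -/
def realClass {G : Type*} [Group G] (g : G) : Set G := {x | IsConj g x ∨ IsConj g⁻¹ x}

/-- `N` is a normal subgroup whose quotient is an `ℓ`-group (the quotient has `ℓ`-power order,
i.e. `N` has `ℓ`-power index). -/
def OQuot {G : Type*} [Group G] (ℓ : ℕ) (N : Subgroup G) : Prop :=
  N.Normal ∧ ∃ k : ℕ, N.index = ℓ ^ k

/-- `H` is a large subgroup of `G`: it contains `O^ℓ(G)`, the smallest normal subgroup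
with `ℓ`-group quotient, for some prime `ℓ`. -/
def IsLarge {G : Type*} [Group G] (H : Subgroup G) : Prop :=
  ∃ ℓ : ℕ, Nat.Prime ℓ ∧
    ∃ N : Subgroup G, OQuot ℓ N ∧ (∀ M : Subgroup G, OQuot ℓ M → N ≤ M) ∧ N ≤ H

section Reps

variable {k : Type*} [CommSemiring k] {G : Type*} [Group G]

/-- The subspace `V^H` of `H`-fixed vectors of a representation. -/
def fixedPts {V : Type*} [AddCommMonoid V] [Module k V]
    (ρ : Representation k G V) (H : Subgroup G) : Submodule k V where
  carrier := {v | ∀ g ∈ H, ρ g v = v}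
  add_mem' := by
    intro a b ha hb g hg
    rw [map_add, ha g hg, hb g hg]
  zero_mem' := by
    intro g hg
    rw [map_zero]
  smul_mem' := by
    intro c v hv g hg
    rw [map_smul, hv g hg]

end Reps

/-- The weak gap condition for a real representation: `dim V^P ≥ 2 dim V^H` for all
`P < H ≤ G` with `P` of prime power order. -/
def WeakGap {G : Type*} [Group G] {V : Type*} [AddCommGroup V] [Module ℝ V]
    (ρ : Representation ℝ G V) : Prop :=
  ∀ P H : Subgroup G, P < H → (∃ ℓ k : ℕ, Nat.Prime ℓ ∧ Nat.card P = ℓ ^ k) →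
    2 * Module.finrank ℝ (fixedPts ρ H) ≤ Module.finrank ℝ (fixedPts ρ P)

/-- Isomorphism of real representations: an equivariant linear equivalence. -/
def RepIso {G : Type*} [Group G] {U V : Type*} [AddCommGroup U] [Module ℝ U]
    [AddCommGroup V] [Module ℝ V]
    (ρU : Representation ℝ G U) (ρV : Representation ℝ G V) : Prop :=
  ∃ e : U ≃ₗ[ℝ] V, ∀ (g : G) (u : U), e (ρU g u) = ρV g (e u)

/-- Two real representations are `𝒫`-matched if their restrictions to every subgroup of
prime power order are isomorphic. -/
def PMatched {G : Type*} [Group G] {U V : Type*} [AddCommGroup U] [Module ℝ U]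
    [AddCommGroup V] [Module ℝ V]
    (ρU : Representation ℝ G U) (ρV : Representation ℝ G V) : Prop :=
  ∀ P : Subgroup G, (∃ ℓ k : ℕ, Nat.Prime ℓ ∧ Nat.card P = ℓ ^ k) →
    RepIso (ρU.comp P.subtype) (ρV.comp P.subtype)

/-- A bundled finite-dimensional-free real representation of `G`. -/
structure RealRep (G : Type*) [Group G] where
  carrier : Type
  [acg : AddCommGroup carrier]
  [mod : Module ℝ carrier]
  rho : Representation ℝ G carrier

attribute [instance] RealRep.acg RealRep.mod

theorem dihedralAut_pow_r (n : ℕ) (u : (ZMod n)ˣ) (k : ℕ) (m : ZMod n) :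
    ((dihedralAut n u) ^ k) (DihedralGroup.r m)
      = DihedralGroup.r (((u ^ k : (ZMod n)ˣ) : ZMod n) * m) := by
  induction k generalizing m with
  | zero => simp
  | succ k ih =>
    rw [pow_succ, MulAut.mul_apply]
    have h1 : (dihedralAut n u) (DihedralGroup.r m) = DihedralGroup.r ((u : ZMod n) * m) := rfl
    rw [h1, ih, pow_succ, Units.val_mul, mul_assoc]

theorem Hyp.phiG_r (h : Hyp p q i) (z : Multiplicative (ZMod q)) (m : ZMod (p * q)) :
    h.phiG z (DihedralGroup.r m)
      = DihedralGroup.r (((h.unit ^ (toAdd z).val : (ZMod (p * q))ˣ) : ZMod (p * q)) * m) := by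
  have h1 : h.phiG z = (dihedralAut (p * q) h.unit) ^ (toAdd z).val := rfl
  rw [h1, dihedralAut_pow_r]

theorem r_inv (n : ℕ) (m : ZMod n) : (DihedralGroup.r m)⁻¹ = DihedralGroup.r (-m) := rfl

/-- The subgroup `N_{pq²} = {(aˡ, cᵐ)}` of `G_{p,q}`. -/
def NSub (h : Hyp p q i) : Subgroup (Gpq h) where
  carrier := {x | ∃ l : ZMod (p * q), x.left = DihedralGroup.r l}
  one_mem' := ⟨0, rfl⟩
  mul_mem' := by
    rintro x y ⟨lx, hx⟩ ⟨ly, hy⟩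
    refine ⟨lx + (h.unit ^ (toAdd x.right).val : (ZMod (p * q))ˣ) * ly, ?_⟩
    rw [SemidirectProduct.mul_left, hx, hy, h.phiG_r, DihedralGroup.r_mul_r]
  inv_mem' := by
    rintro x ⟨lx, hx⟩
    refine ⟨-((h.unit ^ (toAdd x.right⁻¹).val : (ZMod (p * q))ˣ) * lx), ?_⟩
    rw [SemidirectProduct.inv_left, hx, r_inv, h.phiG_r]
    congr 1
    ring

/-- The subgroup `N_{2pq} = {(bᵉaˡ, 1)} ≅ D_{2pq}` of `G_{p,q}`. -/
def N2pqSub (h : Hyp p q i) : Subgroup (Gpq h) :=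
  MonoidHom.ker SemidirectProduct.rightHom

/-- The subgroup `N¹_{pq} = {(aˡ, 1)}` of `G_{p,q}`. -/
def NpqOneSub (h : Hyp p q i) : Subgroup (Gpq h) where
  carrier := {x | x.right = 1 ∧ ∃ l : ZMod (p * q), x.left = DihedralGroup.r l}
  one_mem' := ⟨rfl, 0, rfl⟩
  mul_mem' := by
    rintro x y ⟨hx1, lx, hx⟩ ⟨hy1, ly, hy⟩
    refine ⟨by rw [SemidirectProduct.mul_right, hx1, hy1, mul_one],
      lx + (h.unit ^ (toAdd x.right).val : (ZMod (p * q))ˣ) * ly, ?_⟩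
    rw [SemidirectProduct.mul_left, hx, hy, h.phiG_r, DihedralGroup.r_mul_r]
  inv_mem' := by
    rintro x ⟨hx1, lx, hx⟩
    refine ⟨by rw [SemidirectProduct.inv_right, hx1, inv_one],
      -((h.unit ^ (toAdd x.right⁻¹).val : (ZMod (p * q))ˣ) * lx), ?_⟩
    rw [SemidirectProduct.inv_left, hx, r_inv, h.phiG_r]
    congr 1
    ring

/-- The subgroup `N²_{pq} = {(a^{qs}, cᵐ)}` of `G_{p,q}`. -/
def NpqTwoSub (h : Hyp p q i) : Subgroup (Gpq h) where
  carrier := {x | ∃ s : ZMod (p * q), x.left = DihedralGroup.r ((q : ZMod (p * q)) * s)}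
  one_mem' := ⟨0, by rw [mul_zero]; rfl⟩
  mul_mem' := by
    rintro x y ⟨sx, hx⟩ ⟨sy, hy⟩
    refine ⟨sx + (h.unit ^ (toAdd x.right).val : (ZMod (p * q))ˣ) * sy, ?_⟩
    rw [SemidirectProduct.mul_left, hx, hy, h.phiG_r, DihedralGroup.r_mul_r]
    congr 1
    ring
  inv_mem' := by
    rintro x ⟨sx, hx⟩
    refine ⟨-((h.unit ^ (toAdd x.right⁻¹).val : (ZMod (p * q))ˣ) * sx), ?_⟩
    rw [SemidirectProduct.inv_left, hx, r_inv, h.phiG_r]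
    congr 1
    ring

/-- The subgroup `N_p = {(a^{qs}, 1)}` of `G_{p,q}`. -/
def NpSub (h : Hyp p q i) : Subgroup (Gpq h) where
  carrier := {x | x.right = 1 ∧ ∃ s : ZMod (p * q), x.left = DihedralGroup.r ((q : ZMod (p * q)) * s)}
  one_mem' := ⟨rfl, 0, by rw [mul_zero]; rfl⟩
  mul_mem' := by
    rintro x y ⟨hx1, sx, hx⟩ ⟨hy1, sy, hy⟩
    refine ⟨by rw [SemidirectProduct.mul_right, hx1, hy1, mul_one],
      sx + (h.unit ^ (toAdd x.right).val : (ZMod (p * q))ˣ) * sy, ?_⟩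
    rw [SemidirectProduct.mul_left, hx, hy, h.phiG_r, DihedralGroup.r_mul_r]
    congr 1
    ring
  inv_mem' := by
    rintro x ⟨hx1, sx, hx⟩
    refine ⟨by rw [SemidirectProduct.inv_right, hx1, inv_one],
      -((h.unit ^ (toAdd x.right⁻¹).val : (ZMod (p * q))ˣ) * sx), ?_⟩
    rw [SemidirectProduct.inv_left, hx, r_inv, h.phiG_r]
    congr 1
    ring

/-- The subgroup `N_q = {(a^{ps}, 1)}` of `G_{p,q}`. -/
def NqSub (h : Hyp p q i) : Subgroup (Gpq h) where
  carrier := {x | x.right = 1 ∧ ∃ s : ZMod (p * q), x.left = DihedralGroup.r ((p : ZMod (p * q)) * s)}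
  one_mem' := ⟨rfl, 0, by rw [mul_zero]; rfl⟩
  mul_mem' := by
    rintro x y ⟨hx1, sx, hx⟩ ⟨hy1, sy, hy⟩
    refine ⟨by rw [SemidirectProduct.mul_right, hx1, hy1, mul_one],
      sx + (h.unit ^ (toAdd x.right).val : (ZMod (p * q))ˣ) * sy, ?_⟩
    rw [SemidirectProduct.mul_left, hx, hy, h.phiG_r, DihedralGroup.r_mul_r]
    congr 1
    ring
  inv_mem' := by
    rintro x ⟨hx1, sx, hx⟩
    refine ⟨by rw [SemidirectProduct.inv_right, hx1, inv_one],
      -((h.unit ^ (toAdd x.right⁻¹).val : (ZMod (p * q))ˣ) * sx), ?_⟩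
    rw [SemidirectProduct.inv_left, hx, r_inv, h.phiG_r]
    congr 1
    ring


/-! ### Construction of the representations for Statement 7 -/

section Statement7

variable {p q i : ℕ}

namespace Hyp

theorem p_ne_q (h : Hyp p q i) : p ≠ q := by
  have h1 : 0 < p - 1 := by have := h.hp.two_le; omega
  have := Nat.le_of_dvd h1 h.hdvd
  omega

theorem coprime_pq (h : Hyp p q i) : Nat.Coprime p q :=
  (Nat.coprime_primes h.hp h.hq).mpr h.p_ne_q

theorem three_le_p (h : Hyp p q i) : 3 ≤ p := by
  have h1 := h.hp.two_le
  rcases h.hoddp with ⟨k, hk⟩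
  omega

theorem three_le_q (h : Hyp p q i) : 3 ≤ q := by
  have h1 := h.hq.two_le
  rcases h.hoddq with ⟨k, hk⟩
  omega

theorem n_pos (h : Hyp p q i) : 0 < p * q :=
  Nat.mul_pos h.hp.pos h.hq.pos

theorem one_lt_n (h : Hyp p q i) : 1 < p * q := by
  have h1 := h.three_le_p
  have h2 := h.three_le_q
  nlinarith

/-- `s` : a natural number with `s ≡ 1 (mod p)` and `s ≡ -1 (mod q)`. -/
noncomputable def s (h : Hyp p q i) : ℕ :=
  (Nat.chineseRemainder h.coprime_pq 1 (q - 1) : ℕ)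

theorem s_mod_p (h : Hyp p q i) : h.s ≡ 1 [MOD p] :=
  (Nat.chineseRemainder h.coprime_pq 1 (q - 1)).2.1

theorem s_mod_q (h : Hyp p q i) : h.s ≡ q - 1 [MOD q] :=
  (Nat.chineseRemainder h.coprime_pq 1 (q - 1)).2.2

theorem s_zmod_p (h : Hyp p q i) : ((h.s : ℕ) : ZMod p) = 1 := by
  have := (ZMod.natCast_eq_natCast_iff _ _ _).mpr h.s_mod_p
  simpa using this

theorem s_zmod_q (h : Hyp p q i) : ((h.s : ℕ) : ZMod q) = -1 := by
  have := (ZMod.natCast_eq_natCast_iff _ _ _).mpr h.s_mod_q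
  have h2 : ((q - 1 : ℕ) : ZMod q) = -1 := by
    have h3 : (q : ZMod q) = 0 := ZMod.natCast_self q
    rw [Nat.cast_sub h.hq.one_le, h3]
    ring
  rw [this, h2]

theorem q_dvd_s_add_one (h : Hyp p q i) : q ∣ h.s + 1 := by
  have h1 : h.s + 1 ≡ (q - 1) + 1 [MOD q] := h.s_mod_q.add_right 1
  have h2 : q - 1 + 1 = q := Nat.succ_pred_eq_of_pos h.hq.pos
  rw [h2] at h1
  have h3 : h.s + 1 ≡ 0 [MOD q] := h1.trans (Nat.modEq_zero_iff_dvd.mpr dvd_rfl)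
  exact Nat.modEq_zero_iff_dvd.mp h3

theorem coprime_s_p (h : Hyp p q i) : Nat.Coprime h.s p := by
  haveI : NeZero p := ⟨h.hp.ne_zero⟩
  exact (ZMod.isUnit_iff_coprime h.s p).mp (by rw [h.s_zmod_p]; exact isUnit_one)

theorem coprime_s_q (h : Hyp p q i) : Nat.Coprime h.s q := by
  haveI : NeZero q := ⟨h.hq.ne_zero⟩
  exact (ZMod.isUnit_iff_coprime h.s q).mp (by rw [h.s_zmod_q]; exact isUnit_one.neg)

theorem coprime_s_n (h : Hyp p q i) : Nat.Coprime h.s (p * q) :=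
  Nat.Coprime.mul_right h.coprime_s_p h.coprime_s_q

/-- The primitive `pq`-th root of unity. -/
noncomputable def zeta (h : Hyp p q i) : ℂ :=
  Complex.exp (2 * Real.pi * Complex.I / (p * q))

theorem zeta_prim (h : Hyp p q i) : IsPrimitiveRoot h.zeta (p * q) := by
  have := Complex.isPrimitiveRoot_exp (p * q) h.n_pos.ne'
  simpa [Hyp.zeta] using this

theorem zeta_ne_zero (h : Hyp p q i) : h.zeta ≠ 0 := Complex.exp_ne_zero _

theorem zeta_pow_eq_iff (h : Hyp p q i) {A B : ℕ} :
    h.zeta ^ A = h.zeta ^ B ↔ A ≡ B [MOD p * q] := by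
  have hu : IsPrimitiveRoot ((h.zeta_prim.isUnit h.n_pos.ne').unit) (p * q) :=
    h.zeta_prim.isUnit_unit h.n_pos.ne'
  have hval : ((h.zeta_prim.isUnit h.n_pos.ne').unit : ℂ) = h.zeta :=
    (h.zeta_prim.isUnit h.n_pos.ne').unit_spec
  constructor
  · intro hAB
    have : (h.zeta_prim.isUnit h.n_pos.ne').unit ^ A = (h.zeta_prim.isUnit h.n_pos.ne').unit ^ B := by
      ext
      simpa [hval] using hAB
    have h2 := pow_eq_pow_iff_modEq.mp this
    rwa [← hu.eq_orderOf] at h2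
  · intro hAB
    have : (h.zeta_prim.isUnit h.n_pos.ne').unit ^ A = (h.zeta_prim.isUnit h.n_pos.ne').unit ^ B := by
      rw [pow_eq_pow_iff_modEq, ← hu.eq_orderOf]
      exact hAB
    calc h.zeta ^ A = (((h.zeta_prim.isUnit h.n_pos.ne').unit ^ A : (ℂ)ˣ) : ℂ) := by simp [hval]
      _ = (((h.zeta_prim.isUnit h.n_pos.ne').unit ^ B : (ℂ)ˣ) : ℂ) := by rw [this]
      _ = h.zeta ^ B := by simp [hval]

theorem zeta_mul_conj (h : Hyp p q i) :
    h.zeta * (starRingEnd ℂ) h.zeta = 1 := by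
  have h1 : (starRingEnd ℂ) h.zeta = Complex.exp (-(2 * Real.pi * Complex.I / (p * q))) := by
    rw [Hyp.zeta, ← Complex.exp_conj]
    congr 1
    simp [map_div₀, Complex.conj_I, map_ofNat]
    ring
  rw [h1, Hyp.zeta, ← Complex.exp_add]
  simp

theorem conj_zeta_pow_mul (h : Hyp p q i) (A : ℕ) :
    (starRingEnd ℂ) (h.zeta ^ A) * h.zeta ^ A = 1 := by
  rw [map_pow, ← mul_pow]
  rw [mul_comm ((starRingEnd ℂ) h.zeta)]
  rw [h.zeta_mul_conj, one_pow]

theorem ipow_modeq (h : Hyp p q i) {a b : ℕ} (hab : a ≡ b [MOD q]) :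
    i ^ a ≡ i ^ b [MOD p * q] := by
  wlog hle : a ≤ b generalizing a b
  · exact (this hab.symm (le_of_not_ge hle)).symm
  obtain ⟨t, ht⟩ : q ∣ b - a := (Nat.modEq_iff_dvd' hle).mp hab
  have hb : b = a + q * t := by omega
  subst hb
  calc i ^ a = i ^ a * 1 ^ t := by ring
    _ ≡ i ^ a * (i ^ q) ^ t [MOD p * q] := Nat.ModEq.mul_left _ ((h.pow_q_modeq.pow t).symm)
    _ = i ^ (a + q * t) := by rw [pow_add, pow_mul]

theorem iZp_pow_eq (h : Hyp p q i) {a b : ℕ} (hab : a ≡ b [MOD q]) :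
    (i : ZMod p) ^ a = (i : ZMod p) ^ b := by
  have hq1 : (i : ZMod p) ^ q = 1 := by rw [← h.hord]; exact pow_orderOf_eq_one _
  wlog hle : a ≤ b generalizing a b
  · exact (this hab.symm (le_of_not_ge hle)).symm
  obtain ⟨t, ht⟩ : q ∣ b - a := (Nat.modEq_iff_dvd' hle).mp hab
  have hb : b = a + q * t := by omega
  subst hb
  rw [pow_add, pow_mul, hq1, one_pow, mul_one]

theorem iZp_pow_ne_one (h : Hyp p q i) {a : ℕ} (ha : a % q ≠ 0) :
    (i : ZMod p) ^ a ≠ 1 := by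
  intro hcon
  have h1 : orderOf (i : ZMod p) ∣ a := orderOf_dvd_of_pow_eq_one hcon
  rw [h.hord] at h1
  obtain ⟨t, rfl⟩ := h1
  exact ha (Nat.mul_mod_right q t)

end Hyp

namespace Hyp

theorem phiN_apply (h : Hyp p q i) (y : Multiplicative (ZMod q))
    (x : Multiplicative (ZMod (p * q))) :
    toAdd (h.phiN y x) = (i : ZMod (p * q)) ^ (toAdd y).val * toAdd x := by
  haveI : NeZero q := ⟨h.hq.ne_zero⟩
  show toAdd (((zmodMulAut (p * q) h.unit) ^ (toAdd y).val) x) = _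
  rw [← map_pow]
  show (h.unit : ZMod (p * q)) ^ (toAdd y).val * toAdd x = _
  rw [Hyp.unit, ZMod.coe_unitOfCoprime]

theorem natCast_val_self {N : ℕ} [NeZero N] (z : ZMod N) :
    ((z.val : ℕ) : ZMod N) = z := by
  rw [ZMod.natCast_val, ZMod.cast_id]

/-- If `(c : ZMod N) * z = 0` and `c` is coprime to `d ∣ N`, then `z.val ≡ 0 mod d`. -/
theorem val_cast_zero_of_mul_zero {N d c : ℕ} [NeZero N] (hd : d ∣ N)
    (hc : Nat.Coprime c d) {z : ZMod N} (hz : (c : ZMod N) * z = 0) :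
    ((z.val : ℕ) : ZMod d) = 0 := by
  have h1 : ((c * z.val : ℕ) : ZMod N) = 0 := by
    push_cast
    rw [natCast_val_self]
    exact hz
  have h2 : N ∣ c * z.val := (ZMod.natCast_eq_zero_iff _ _).mp h1
  have h3 : d ∣ z.val * c := by
    rw [mul_comm]
    exact dvd_trans hd h2
  have h4 : d ∣ z.val := hc.symm.dvd_of_dvd_mul_right h3
  exact (ZMod.natCast_eq_zero_iff _ _).mpr h4

end Hyp

/-- The representation `ρ_t` of `N_{pq²}` on `ℂ^q` (viewed over `ℝ`):
`a` acts by the diagonal matrix with entries `ζ^{t·iʲ}` and `c` by the shift. -/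
noncomputable def rhoRep (h : Hyp p q i) (t : ℕ) :
    Representation ℝ (Npq2 h) (ZMod q → ℂ) where
  toFun g :=
    { toFun := fun v j => h.zeta ^ (t * i ^ j.val * (toAdd g.left).val) * v (j + toAdd g.right)
      map_add' := by
        intro v w
        funext j
        simp only [Pi.add_apply]
        ring
      map_smul' := by
        intro r v
        funext j
        simp only [Pi.smul_apply, RingHom.id_apply, Complex.real_smul]
        ring }
  map_one' := by
    haveI : NeZero (p * q) := ⟨h.n_pos.ne'⟩
    apply LinearMap.ext
    intro v
    funext j
    show h.zeta ^ (t * i ^ j.val * (toAdd (1 : Npq2 h).left).val) * v (j + toAdd (1 : Npq2 h).right) = v j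
    rw [SemidirectProduct.one_left, SemidirectProduct.one_right]
    simp
  map_mul' g₁ g₂ := by
    haveI : NeZero (p * q) := ⟨h.n_pos.ne'⟩
    haveI : NeZero q := ⟨h.hq.ne_zero⟩
    apply LinearMap.ext
    intro v
    funext j
    show h.zeta ^ (t * i ^ j.val * (toAdd (g₁ * g₂).left).val) * v (j + toAdd (g₁ * g₂).right)
      = h.zeta ^ (t * i ^ j.val * (toAdd g₁.left).val) *
        (h.zeta ^ (t * i ^ (j + toAdd g₁.right).val * (toAdd g₂.left).val) *
          v (j + toAdd g₁.right + toAdd g₂.right))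
    rw [SemidirectProduct.mul_right, toAdd_mul, ← add_assoc, ← mul_assoc, ← pow_add]
    congr 1
    apply h.zeta_pow_eq_iff.mpr
    -- exponent congruence
    have hleft : (toAdd (g₁ * g₂).left).val
        ≡ (toAdd g₁.left).val + i ^ (toAdd g₁.right).val * (toAdd g₂.left).val [MOD p * q] := by
      rw [SemidirectProduct.mul_left, toAdd_mul, h.phiN_apply]
      calc (toAdd g₁.left + (i : ZMod (p * q)) ^ (toAdd g₁.right).val * toAdd g₂.left).val
          ≡ (toAdd g₁.left).val + ((i : ZMod (p * q)) ^ (toAdd g₁.right).val * toAdd g₂.left).val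
            [MOD p * q] := by rw [ZMod.val_add]; exact Nat.mod_modEq _ _
        _ ≡ (toAdd g₁.left).val + i ^ (toAdd g₁.right).val * (toAdd g₂.left).val [MOD p * q] := by
            apply Nat.ModEq.add_left
            have : (i : ZMod (p * q)) ^ (toAdd g₁.right).val * toAdd g₂.left
                = ((i ^ (toAdd g₁.right).val * (toAdd g₂.left).val : ℕ) : ZMod (p * q)) := by
              push_cast
              rw [Hyp.natCast_val_self]
            rw [this, ZMod.val_natCast]
            exact Nat.mod_modEq _ _
    have hexp : i ^ (j + toAdd g₁.right).val ≡ i ^ (j.val + (toAdd g₁.right).val) [MOD p * q] := by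
      apply h.ipow_modeq
      rw [ZMod.val_add]
      exact Nat.mod_modEq _ _
    calc t * i ^ j.val * (toAdd (g₁ * g₂).left).val
        ≡ t * i ^ j.val * ((toAdd g₁.left).val + i ^ (toAdd g₁.right).val * (toAdd g₂.left).val)
          [MOD p * q] := Nat.ModEq.mul_left _ hleft
      _ = t * i ^ j.val * (toAdd g₁.left).val
          + t * i ^ (j.val + (toAdd g₁.right).val) * (toAdd g₂.left).val := by
          rw [pow_add]; ring
      _ ≡ t * i ^ j.val * (toAdd g₁.left).val
          + t * i ^ (j + toAdd g₁.right).val * (toAdd g₂.left).val [MOD p * q] := by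
          exact Nat.ModEq.add_left _ (Nat.ModEq.mul_right _ (Nat.ModEq.mul_left _ hexp.symm))

theorem rhoRep_apply (h : Hyp p q i) (t : ℕ) (g : Npq2 h) (v : ZMod q → ℂ) (j : ZMod q) :
    rhoRep h t g v j
      = h.zeta ^ (t * i ^ j.val * (toAdd g.left).val) * v (j + toAdd g.right) := rfl

theorem finite_Npq2 (h : Hyp p q i) : Finite (Npq2 h) := by
  haveI : NeZero (p * q) := ⟨h.n_pos.ne'⟩
  haveI : NeZero q := ⟨h.hq.ne_zero⟩
  exact Finite.of_equiv (Multiplicative (ZMod (p * q)) × Multiplicative (ZMod q))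
    ⟨fun z => ⟨z.1, z.2⟩, fun g => (g.left, g.right), fun z => rfl, fun g => rfl⟩

/-- Formula for powers in `N_{pq²}`. -/
theorem pow_formula (h : Hyp p q i) (x : Npq2 h) (k : ℕ) :
    toAdd ((x ^ k).left)
      = (∑ j ∈ Finset.range k, ((i : ZMod (p * q)) ^ (toAdd x.right).val) ^ j) * toAdd x.left
    ∧ (x ^ k).right = x.right ^ k := by
  induction k with
  | zero =>
    constructor
    · rw [pow_zero, SemidirectProduct.one_left]
      simp
    · rw [pow_zero, SemidirectProduct.one_right, pow_zero]
  | succ k ih =>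
    rw [pow_succ']
    constructor
    · rw [SemidirectProduct.mul_left, toAdd_mul, h.phiN_apply, ih.1, geom_sum_succ]
      ring
    · rw [SemidirectProduct.mul_right, ih.2, pow_succ']

/-- If `x` has trivial `c`-part and `x^C = 1` with `C` coprime to `d ∣ pq`,
then the `a`-part of `x` vanishes mod `d`. -/
theorem left_cast_zero (h : Hyp p q i) {x : Npq2 h} (hx1 : x.right = 1) {C : ℕ}
    (hxC : x ^ C = 1) {d : ℕ} (hd : d ∣ p * q) (hC : Nat.Coprime C d) :
    (((toAdd x.left).val : ℕ) : ZMod d) = 0 := by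
  haveI : NeZero (p * q) := ⟨h.n_pos.ne'⟩
  have h1 := (pow_formula h x C).1
  rw [hxC, SemidirectProduct.one_left, hx1] at h1
  simp only [toAdd_one, ZMod.val_zero, pow_zero, one_pow, Finset.sum_const, Finset.card_range,
    nsmul_eq_mul, mul_one] at h1
  exact Hyp.val_cast_zero_of_mul_zero hd hC h1.symm

/-- Elements of a subgroup of order coprime to `q` have trivial `c`-part. -/
theorem right_eq_one (h : Hyp p q i) {x : Npq2 h} {C : ℕ} (hxC : x ^ C = 1)
    (hC : Nat.Coprime C q) : x.right = 1 := by
  haveI : NeZero q := ⟨h.hq.ne_zero⟩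
  have h1 : x.right ^ C = 1 := by
    have := congrArg SemidirectProduct.rightHom hxC
    rwa [map_pow, map_one, SemidirectProduct.rightHom_eq_right] at this
  have h2 : (C : ZMod q) * toAdd x.right = 0 := by
    have h3 : toAdd (x.right ^ C) = (0 : ZMod q) := by rw [h1, toAdd_one]
    rw [toAdd_pow, nsmul_eq_mul] at h3
    exact h3
  have h4 := Hyp.val_cast_zero_of_mul_zero (dvd_refl q) hC h2
  rw [Hyp.natCast_val_self] at h4
  have : toAdd x.right = 0 := h4
  calc x.right = ofAdd (toAdd x.right) := rfl
    _ = ofAdd 0 := by rw [this]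
    _ = 1 := ofAdd_zero

theorem mem_fixedPts_iff {h : Hyp p q i} {t : ℕ} {H : Subgroup (Npq2 h)} {v : ZMod q → ℂ} :
    v ∈ fixedPts (rhoRep h t) H ↔ ∀ g ∈ H, rhoRep h t g v = v := Iff.rfl

theorem fixed_eq_bot (h : Hyp p q i) {t : ℕ} (ht : Nat.Coprime t (p * q))
    {H : Subgroup (Npq2 h)} {x : Npq2 h} (hxH : x ∈ H) (hx1 : x.right = 1)
    (hx2 : x.left ≠ 1) : fixedPts (rhoRep h t) H = ⊥ := by
  haveI : NeZero (p * q) := ⟨h.n_pos.ne'⟩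
  apply le_antisymm _ bot_le
  intro v hv
  rw [Submodule.mem_bot]
  funext j
  show v j = 0
  have h1 := congrFun (hv x hxH) j
  rw [rhoRep_apply] at h1
  have h2 : toAdd x.right = 0 := by rw [hx1, toAdd_one]
  rw [h2, add_zero] at h1
  by_contra hvj
  have h3 : h.zeta ^ (t * i ^ j.val * (toAdd x.left).val) = 1 := by
    have h4 : (h.zeta ^ (t * i ^ j.val * (toAdd x.left).val) - 1) * v j = 0 := by
      rw [sub_mul, one_mul, h1, sub_self]
    rcases mul_eq_zero.mp h4 with h5 | h5
    · exact sub_eq_zero.mp h5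
    · exact absurd h5 hvj
  have h6 : t * i ^ j.val * (toAdd x.left).val ≡ 0 [MOD p * q] :=
    h.zeta_pow_eq_iff.mp (by rw [pow_zero]; exact h3)
  have h7 : (p * q) ∣ t * i ^ j.val * (toAdd x.left).val := (Nat.modEq_zero_iff_dvd).mp h6
  have h8 : Nat.Coprime (p * q) (t * i ^ j.val) :=
    Nat.Coprime.mul_right ht.symm (h.coprime.symm.pow_right _)
  have h9 : (p * q) ∣ (toAdd x.left).val := by
    apply h8.dvd_of_dvd_mul_right
    rwa [mul_comm (t * i ^ j.val)] at h7
  have h10 : (toAdd x.left).val = 0 :=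
    Nat.eq_zero_of_dvd_of_lt h9 (ZMod.val_lt _)
  have h11 : toAdd x.left = 0 := (ZMod.val_eq_zero _).mp h10
  exact hx2 (by
    calc x.left = ofAdd (toAdd x.left) := rfl
      _ = ofAdd 0 := by rw [h11]
      _ = 1 := ofAdd_zero)

theorem fixed_rank_le_two (h : Hyp p q i) {t : ℕ} {H : Subgroup (Npq2 h)} {x : Npq2 h}
    (hxH : x ∈ H) (hx : x.right ≠ 1) :
    Module.finrank ℝ (fixedPts (rhoRep h t) H) ≤ 2 := by
  haveI : NeZero q := ⟨h.hq.ne_zero⟩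
  haveI : Fact (Nat.Prime q) := ⟨h.hq⟩
  set f : (fixedPts (rhoRep h t) H) →ₗ[ℝ] ℂ :=
    (LinearMap.proj (0 : ZMod q)).comp (Submodule.subtype _) with hf
  have hinj : Function.Injective f := by
    rw [← LinearMap.ker_eq_bot]
    apply le_antisymm _ bot_le
    rintro ⟨v, hv⟩ hker
    have hv0 : v 0 = 0 := hker
    have hm : toAdd x.right ≠ 0 := by
      intro hcon
      exact hx (by
        calc x.right = ofAdd (toAdd x.right) := rfl
          _ = ofAdd 0 := by rw [hcon]
          _ = 1 := ofAdd_zero)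
    have hrel : ∀ j : ZMod q, v j
        = h.zeta ^ (t * i ^ j.val * (toAdd x.left).val) * v (j + toAdd x.right) := by
      intro j
      have := congrFun (hv x hxH) j
      rw [rhoRep_apply] at this
      exact this.symm
    have hzero : ∀ k : ℕ, v (k • (-(toAdd x.right))) = 0 := by
      intro k
      induction k with
      | zero => simpa using hv0
      | succ k ih =>
        have h1 := hrel ((k + 1) • (-(toAdd x.right)))
        have h2 : (k + 1) • (-(toAdd x.right)) + toAdd x.right = k • (-(toAdd x.right)) := by
          rw [succ_nsmul]
          ring
        rw [h2, ih, mul_zero] at h1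
        exact h1
    have hall : ∀ j : ZMod q, v j = 0 := by
      intro j
      have hmne : -(toAdd x.right) ≠ 0 := neg_ne_zero.mpr hm
      have : (((j * (-(toAdd x.right))⁻¹).val : ℕ) • (-(toAdd x.right))) = j := by
        rw [nsmul_eq_mul, Hyp.natCast_val_self]
        field_simp
      rw [← this]
      exact hzero _
    apply Submodule.mem_bot _ |>.mpr
    exact Subtype.ext (funext hall)
  haveI : Module.Finite ℝ ℂ := inferInstance
  have := LinearMap.finrank_le_finrank_of_injective hinj
  rwa [Complex.finrank_real_complex] at this

theorem fixed_bot_eq_top (h : Hyp p q i) (t : ℕ) :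
    fixedPts (rhoRep h t) (⊥ : Subgroup (Npq2 h)) = ⊤ := by
  apply le_antisymm le_top
  intro v _
  intro g hg
  rw [Subgroup.mem_bot] at hg
  rw [hg, map_one]
  rfl

theorem finrank_total (h : Hyp p q i) :
    Module.finrank ℝ (⊤ : Submodule ℝ (ZMod q → ℂ)) = 2 * q := by
  haveI : NeZero q := ⟨h.hq.ne_zero⟩
  rw [finrank_top, Module.finrank_pi_fintype, Finset.sum_const, Finset.card_univ,
    Complex.finrank_real_complex, ZMod.card]
  ring

/-- If the `c`-part of `x` is trivial and its `a`-part is divisible by `q`,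
the two representations agree at `x`. -/
theorem rho_eq_at (h : Hyp p q i) {x : Npq2 h} (hx1 : x.right = 1)
    (hq0 : (((toAdd x.left).val : ℕ) : ZMod q) = 0) :
    rhoRep h 1 x = rhoRep h h.s x := by
  apply LinearMap.ext
  intro v
  funext j
  rw [rhoRep_apply, rhoRep_apply]
  congr 1
  apply h.zeta_pow_eq_iff.mpr
  have hqz : q ∣ (toAdd x.left).val := (ZMod.natCast_eq_zero_iff _ _).mp hq0
  apply (Nat.modEq_and_modEq_iff_modEq_mul h.coprime_pq).mp
  constructor
  · -- mod p : s ≡ 1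
    exact Nat.ModEq.mul_right _ (Nat.ModEq.mul_right _ h.s_mod_p.symm)
  · -- mod q : both sides are ≡ 0
    obtain ⟨w, hw⟩ := hqz
    have h1 : ∀ t : ℕ, t * i ^ j.val * (toAdd x.left).val ≡ 0 [MOD q] := by
      intro t
      apply Nat.modEq_zero_iff_dvd.mpr
      rw [hw]
      exact ⟨t * i ^ j.val * w, by ring⟩
    exact (h1 1).trans (h1 h.s).symm

/-- The intertwining operator `e_l : v ↦ (j ↦ ζ^{(s+1)·iʲ·l} · conj (v j))`. -/
noncomputable def El (h : Hyp p q i) (l : ℕ) : (ZMod q → ℂ) ≃ₗ[ℝ] (ZMod q → ℂ) where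
  toFun v j := h.zeta ^ ((h.s + 1) * i ^ j.val * l) * (starRingEnd ℂ) (v j)
  invFun v j := (starRingEnd ℂ) ((h.zeta ^ ((h.s + 1) * i ^ j.val * l))⁻¹ * v j)
  left_inv v := by
    funext j
    have hZ : h.zeta ^ ((h.s + 1) * i ^ j.val * l) ≠ 0 := pow_ne_zero _ h.zeta_ne_zero
    show (starRingEnd ℂ) ((h.zeta ^ ((h.s + 1) * i ^ j.val * l))⁻¹ *
        (h.zeta ^ ((h.s + 1) * i ^ j.val * l) * (starRingEnd ℂ) (v j))) = v j
    rw [← mul_assoc, inv_mul_cancel₀ hZ, one_mul, Complex.conj_conj]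
  right_inv v := by
    funext j
    have hZ : h.zeta ^ ((h.s + 1) * i ^ j.val * l) ≠ 0 := pow_ne_zero _ h.zeta_ne_zero
    show h.zeta ^ ((h.s + 1) * i ^ j.val * l) * (starRingEnd ℂ)
        ((starRingEnd ℂ) ((h.zeta ^ ((h.s + 1) * i ^ j.val * l))⁻¹ * v j)) = v j
    rw [Complex.conj_conj, ← mul_assoc, mul_inv_cancel₀ hZ, one_mul]
  map_add' v w := by
    funext j
    simp only [Pi.add_apply, map_add]
    ring
  map_smul' r v := by
    funext j
    simp only [Pi.smul_apply, RingHom.id_apply, Complex.real_smul, map_mul,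
      Complex.conj_ofReal]
    ring

theorem El_apply (h : Hyp p q i) (l : ℕ) (v : ZMod q → ℂ) (j : ZMod q) :
    El h l v j = h.zeta ^ ((h.s + 1) * i ^ j.val * l) * (starRingEnd ℂ) (v j) := rfl

/-- The congruence condition under which `El h l` intertwines at the element `x`. -/
def Cond (h : Hyp p q i) (l : ℕ) (x : Npq2 h) : Prop :=
  (h.s + 1) * l ≡ (h.s + 1) * ((toAdd x.left).val + i ^ (toAdd x.right).val * l) [MOD p * q]

theorem El_intertwines (h : Hyp p q i) {l : ℕ} {x : Npq2 h} (hc : Cond h l x)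
    (v : ZMod q → ℂ) : El h l (rhoRep h 1 x v) = rhoRep h h.s x (El h l v) := by
  haveI : NeZero (p * q) := ⟨h.n_pos.ne'⟩
  haveI : NeZero q := ⟨h.hq.ne_zero⟩
  funext j
  rw [El_apply, rhoRep_apply, rhoRep_apply, El_apply]
  set zv := (toAdd x.left).val
  set mv := (toAdd x.right).val
  set w := v (j + toAdd x.right)
  -- goal : ζ^{(s+1) iʲ l} * conj (ζ^{iʲ zv} * w) = ζ^{s iʲ zv} * (ζ^{(s+1) i^{j+m} l} * conj w)
  rw [map_mul]
  have key : h.zeta ^ ((h.s + 1) * i ^ j.val * l)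
      = h.zeta ^ (h.s * (i ^ j.val) * zv + (h.s + 1) * i ^ (j + toAdd x.right).val * l
          + 1 * i ^ j.val * zv) := by
    apply h.zeta_pow_eq_iff.mpr
    have hexp : i ^ (j + toAdd x.right).val ≡ i ^ (j.val + mv) [MOD p * q] := by
      apply h.ipow_modeq
      rw [ZMod.val_add]
      exact Nat.mod_modEq _ _
    calc (h.s + 1) * i ^ j.val * l
        = i ^ j.val * ((h.s + 1) * l) := by ring
      _ ≡ i ^ j.val * ((h.s + 1) * (zv + i ^ mv * l)) [MOD p * q] :=
          Nat.ModEq.mul_left _ hc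
      _ = h.s * (i ^ j.val) * zv + (h.s + 1) * (i ^ (j.val + mv)) * l
          + 1 * i ^ j.val * zv := by rw [pow_add]; ring
      _ ≡ h.s * (i ^ j.val) * zv + (h.s + 1) * i ^ (j + toAdd x.right).val * l
          + 1 * i ^ j.val * zv [MOD p * q] := by
          exact Nat.ModEq.add_right _ (Nat.ModEq.add_left _
            (Nat.ModEq.mul_right _ (Nat.ModEq.mul_left _ hexp.symm)))
  calc h.zeta ^ ((h.s + 1) * i ^ j.val * l) * ((starRingEnd ℂ) (h.zeta ^ (1 * i ^ j.val * zv)) *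
        (starRingEnd ℂ) w)
      = h.zeta ^ (h.s * (i ^ j.val) * zv + (h.s + 1) * i ^ (j + toAdd x.right).val * l
          + 1 * i ^ j.val * zv) * ((starRingEnd ℂ) (h.zeta ^ (1 * i ^ j.val * zv)) *
        (starRingEnd ℂ) w) := by rw [key]
    _ = h.zeta ^ (h.s * (i ^ j.val) * zv + (h.s + 1) * i ^ (j + toAdd x.right).val * l)
          * (((starRingEnd ℂ) (h.zeta ^ (1 * i ^ j.val * zv)) * h.zeta ^ (1 * i ^ j.val * zv)) *
        (starRingEnd ℂ) w) := by rw [pow_add]; ring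
    _ = h.zeta ^ (h.s * i ^ j.val * zv) * (h.zeta ^ ((h.s + 1) * i ^ (j + toAdd x.right).val * l)
          * (starRingEnd ℂ) w) := by
        rw [h.conj_zeta_pow_mul, pow_add]
        ring

/-- Consistency of the intertwining parameter over pairs of elements with nontrivial
`c`-part, in a `q`-subgroup. -/
theorem pair_consistency (h : Hyp p q i) {C : ℕ} (hC : Nat.Coprime C p) {x₀ x : Npq2 h}
    (hm₀ : toAdd x₀.right ≠ 0) (hm : toAdd x.right ≠ 0)
    (hy : (x₀ ^ ((-(toAdd x.right)) * (toAdd x₀.right)⁻¹ : ZMod q).val * x) ^ C = 1) :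
    (((toAdd x₀.left).val : ℕ) : ZMod p) * (1 - (i : ZMod p) ^ (toAdd x₀.right).val)⁻¹ *
      (1 - (i : ZMod p) ^ (toAdd x.right).val) = (((toAdd x.left).val : ℕ) : ZMod p) := by
  haveI : NeZero (p * q) := ⟨h.n_pos.ne'⟩
  haveI : NeZero q := ⟨h.hq.ne_zero⟩
  haveI : NeZero p := ⟨h.hp.ne_zero⟩
  haveI : Fact (Nat.Prime p) := ⟨h.hp⟩
  haveI : Fact (Nat.Prime q) := ⟨h.hq⟩
  set K : ℕ := ((-(toAdd x.right)) * (toAdd x₀.right)⁻¹ : ZMod q).val with hK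
  set y : Npq2 h := x₀ ^ K * x with hydef
  set m₀v : ℕ := (toAdd x₀.right).val with hm₀v
  set mv : ℕ := (toAdd x.right).val with hmv
  -- the c-part of y is trivial
  have htoy : toAdd y.right = 0 := by
    rw [hydef, SemidirectProduct.mul_right, (pow_formula h x₀ K).2, toAdd_mul, toAdd_pow,
      nsmul_eq_mul, hK, Hyp.natCast_val_self, mul_assoc,
      inv_mul_cancel₀ hm₀, mul_one]
    exact neg_add_cancel _
  have hyr : y.right = 1 := by
    calc y.right = ofAdd (toAdd y.right) := rfl
      _ = ofAdd 0 := by rw [htoy]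
      _ = 1 := ofAdd_zero
  -- the a-part of y vanishes mod p
  have hz : (((toAdd y.left).val : ℕ) : ZMod p) = 0 :=
    left_cast_zero h hyr hy (dvd_mul_right p q) hC
  -- expand the a-part of y
  have hyl : toAdd y.left
      = (∑ j ∈ Finset.range K, ((i : ZMod (p * q)) ^ m₀v) ^ j) * toAdd x₀.left
        + (i : ZMod (p * q)) ^ ((K • toAdd x₀.right).val) * toAdd x.left := by
    rw [hydef, SemidirectProduct.mul_left, toAdd_mul, h.phiN_apply, (pow_formula h x₀ K).1,
      (pow_formula h x₀ K).2, toAdd_pow]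
  -- cast everything to `ZMod p`
  have hcast : ∀ z : ZMod (p * q),
      ((z.val : ℕ) : ZMod p) = ZMod.castHom (dvd_mul_right p q) (ZMod p) z := by
    intro z
    rw [ZMod.natCast_val, ZMod.castHom_apply]
  set I : ZMod p := (i : ZMod p) with hI
  set Z₀ : ZMod p := (((toAdd x₀.left).val : ℕ) : ZMod p) with hZ₀
  set Z : ZMod p := (((toAdd x.left).val : ℕ) : ZMod p) with hZ
  set α : ZMod p := I ^ m₀v with hα
  set β : ZMod p := I ^ mv with hβ
  set σ : ZMod p := ∑ j ∈ Finset.range K, α ^ j with hσ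
  set γ : ZMod p := I ^ (K * m₀v) with hγ
  have e1 : σ * Z₀ + γ * Z = 0 := by
    have h0 := hz
    rw [hcast, hyl, map_add, map_mul, map_mul, map_sum] at h0
    simp only [map_pow, map_natCast] at h0
    rw [← hcast, ← hcast] at h0
    have hE : (i : ZMod p) ^ ((K • toAdd x₀.right).val) = γ := by
      rw [hγ]
      apply h.iZp_pow_eq
      have : (K • toAdd x₀.right) = ((K * m₀v : ℕ) : ZMod q) := by
        rw [nsmul_eq_mul]
        push_cast
        rw [Hyp.natCast_val_self, Hyp.natCast_val_self]
      rw [this, ZMod.val_natCast]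
      exact Nat.mod_modEq _ _
    rw [hE] at h0
    exact h0
  have e2 : σ * (α - 1) = γ - 1 := by
    rw [hσ, geom_sum_mul, hα, hγ, ← pow_mul, mul_comm m₀v K]
  have e3 : γ * β = 1 := by
    have hdvd : q ∣ K * m₀v + mv := by
      apply (ZMod.natCast_eq_zero_iff _ _).mp
      push_cast
      rw [Hyp.natCast_val_self, Hyp.natCast_val_self, Hyp.natCast_val_self]
      rw [mul_assoc, inv_mul_cancel₀ hm₀, mul_one]
      exact neg_add_cancel _
    rw [hγ, hβ, ← pow_add]
    have := h.iZp_pow_eq (Nat.modEq_zero_iff_dvd.mpr hdvd)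
    rwa [pow_zero] at this
  have hαne : (1 : ZMod p) - α ≠ 0 := by
    intro hcon
    have h1 : I ^ m₀v = 1 := by
      rw [← hα]
      linear_combination -hcon
    apply h.iZp_pow_ne_one (a := m₀v) _ h1
    have h2 : m₀v < q := ZMod.val_lt _
    have h3 : m₀v ≠ 0 := fun hcon2 => hm₀ ((ZMod.val_eq_zero _).mp hcon2)
    rw [Nat.mod_eq_of_lt h2]
    exact h3
  have hmain : Z₀ * (1 - β) = Z * (1 - α) := by
    linear_combination (β * (α - 1)) * e1 - (β * Z₀) * e2 + (Z - Z * α - Z₀) * e3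
  calc Z₀ * (1 - α)⁻¹ * (1 - β) = Z₀ * (1 - β) * (1 - α)⁻¹ := by ring
    _ = Z * (1 - α) * (1 - α)⁻¹ := by rw [hmain]
    _ = Z := by rw [mul_assoc, mul_inv_cancel₀ hαne, mul_one]

/-- The two representations are 𝒫-matched. -/
theorem pmatched_rho (h : Hyp p q i) : PMatched (rhoRep h 1) (rhoRep h h.s) := by
  haveI := finite_Npq2 h
  haveI : NeZero (p * q) := ⟨h.n_pos.ne'⟩
  haveI : NeZero q := ⟨h.hq.ne_zero⟩
  haveI : NeZero p := ⟨h.hp.ne_zero⟩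
  haveI : Fact (Nat.Prime p) := ⟨h.hp⟩
  haveI : Fact (Nat.Prime q) := ⟨h.hq⟩
  rintro P ⟨ℓ, k, hl, hcard⟩
  have hpow : ∀ x ∈ P, x ^ (ℓ ^ k) = 1 := by
    intro x hx
    have h1 : (⟨x, hx⟩ : P) ^ (ℓ ^ k) = 1 := by rw [← hcard]; exact pow_card_eq_one'
    have h2 := congrArg (fun z : P => (z : Npq2 h)) h1
    simpa using h2
  by_cases hqd : q ∣ ℓ ^ k
  · -- `P` is a `q`-group : use a conjugate of the conjugation intertwiner
    have hCp : Nat.Coprime (ℓ ^ k) p := by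
      have hql : q = ℓ := (Nat.prime_dvd_prime_iff_eq h.hq hl).mp (h.hq.dvd_of_dvd_pow hqd)
      rw [← hql]
      exact Nat.Coprime.pow_left _ ((Nat.coprime_primes h.hq h.hp).mpr h.p_ne_q.symm)
    have hmodq : ∀ A B : ℕ, (h.s + 1) * A ≡ (h.s + 1) * B [MOD q] := by
      intro A B
      obtain ⟨d, hd⟩ := h.q_dvd_s_add_one
      have hz : ∀ X : ℕ, (h.s + 1) * X ≡ 0 [MOD q] := fun X =>
        Nat.modEq_zero_iff_dvd.mpr ⟨d * X, by rw [hd]; ring⟩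
      exact (hz A).trans (hz B).symm
    have hcond : ∃ l : ℕ, ∀ x ∈ P, Cond h l x := by
      by_cases hex : ∃ x₀ ∈ P, toAdd x₀.right ≠ 0
      · obtain ⟨x₀, hx₀P, hm₀⟩ := hex
        refine ⟨((((toAdd x₀.left).val : ℕ) : ZMod p) *
          (1 - (i : ZMod p) ^ (toAdd x₀.right).val)⁻¹).val, ?_⟩
        intro x hx
        set l : ℕ := ((((toAdd x₀.left).val : ℕ) : ZMod p) *
          (1 - (i : ZMod p) ^ (toAdd x₀.right).val)⁻¹).val with hldef
        apply (Nat.modEq_and_modEq_iff_modEq_mul h.coprime_pq).mp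
        refine ⟨?_, hmodq _ _⟩
        -- mod p
        apply (ZMod.natCast_eq_natCast_iff _ _ _).mp
        push_cast
        rw [h.s_zmod_p, Hyp.natCast_val_self]
        set L : ZMod p := (((toAdd x₀.left).val : ℕ) : ZMod p) *
          (1 - (i : ZMod p) ^ (toAdd x₀.right).val)⁻¹ with hL
        by_cases hxr : toAdd x.right = 0
        · -- `x` has trivial `c`-part: its `a`-part vanishes mod `p`
          have hr1 : x.right = 1 := by
            calc x.right = ofAdd (toAdd x.right) := rfl
              _ = ofAdd 0 := by rw [hxr]
              _ = 1 := ofAdd_zero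
          have hZ : (((toAdd x.left).val : ℕ) : ZMod p) = 0 :=
            left_cast_zero h hr1 (hpow x hx) (dvd_mul_right p q) hCp
          rw [hxr, hZ]
          simp only [ZMod.val_zero, pow_zero]
          ring
        · -- `x` has nontrivial `c`-part: use consistency
          have hkey := pair_consistency h hCp hm₀ hxr
            (hpow _ (P.mul_mem (P.pow_mem hx₀P _) hx))
          rw [← hL] at hkey
          linear_combination (2 : ZMod p) * hkey
      · push_neg at hex
        refine ⟨0, ?_⟩
        intro x hx
        have hr1 : x.right = 1 := by
          calc x.right = ofAdd (toAdd x.right) := rfl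
            _ = ofAdd 0 := by rw [hex x hx]
            _ = 1 := ofAdd_zero
        have hZ : (((toAdd x.left).val : ℕ) : ZMod p) = 0 :=
          left_cast_zero h hr1 (hpow x hx) (dvd_mul_right p q) hCp
        apply (Nat.modEq_and_modEq_iff_modEq_mul h.coprime_pq).mp
        refine ⟨?_, hmodq _ _⟩
        apply (ZMod.natCast_eq_natCast_iff _ _ _).mp
        push_cast
        rw [h.s_zmod_p, hZ]
        ring
    obtain ⟨l, hl2⟩ := hcond
    exact ⟨El h l, fun g u => El_intertwines h (hl2 _ g.2) u⟩
  · -- order of `P` is coprime to `q` : the restrictions are literally equal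
    have hCq : Nat.Coprime (ℓ ^ k) q :=
      Nat.coprime_comm.mp ((Nat.Prime.coprime_iff_not_dvd h.hq).mpr hqd)
    have hall : ∀ x ∈ P, rhoRep h 1 x = rhoRep h h.s x := by
      intro x hx
      have hr : x.right = 1 := right_eq_one h (hpow x hx) hCq
      have hq0 : (((toAdd x.left).val : ℕ) : ZMod q) = 0 :=
        left_cast_zero h hr (hpow x hx) (dvd_mul_left q p) hCq
      exact rho_eq_at h hr hq0
    refine ⟨LinearEquiv.refl ℝ _, ?_⟩
    intro g u
    simp only [LinearEquiv.refl_apply, MonoidHom.comp_apply, Subgroup.coe_subtype]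
    rw [hall _ g.2]

theorem aN_left (h : Hyp p q i) : (aN h).left = ofAdd (1 : ZMod (p * q)) := rfl

theorem aN_right (h : Hyp p q i) : (aN h).right = 1 := rfl

theorem rho_aN_apply (h : Hyp p q i) (t : ℕ) (v : ZMod q → ℂ) (j : ZMod q) :
    rhoRep h t (aN h) v j = h.zeta ^ (t * i ^ j.val) * v j := by
  haveI : NeZero (p * q) := ⟨h.n_pos.ne'⟩
  haveI : Fact (1 < p * q) := ⟨h.one_lt_n⟩
  rw [rhoRep_apply, aN_left, aN_right]
  simp only [toAdd_ofAdd, toAdd_one, add_zero]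
  rw [ZMod.val_one, mul_one]

/-- The two representations are not isomorphic. -/
theorem not_repIso (h : Hyp p q i) : ¬ RepIso (rhoRep h 1) (rhoRep h h.s) := by
  haveI : NeZero (p * q) := ⟨h.n_pos.ne'⟩
  haveI : NeZero q := ⟨h.hq.ne_zero⟩
  haveI : NeZero p := ⟨h.hp.ne_zero⟩
  haveI : Fact (Nat.Prime p) := ⟨h.hp⟩
  rintro ⟨e, he⟩
  classical
  set c : ℝ := 2 * Real.cos (2 * Real.pi / (p * q)) with hc
  have hcC : (c : ℂ) = h.zeta + h.zeta⁻¹ := by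
    have h1 : h.zeta = Complex.exp ((2 * Real.pi / (p * q) : ℝ) * Complex.I) := by
      rw [Hyp.zeta]
      congr 1
      push_cast
      ring
    have h2 : h.zeta⁻¹ = Complex.exp (-(((2 * Real.pi / (p * q) : ℝ)) : ℂ) * Complex.I) := by
      rw [h1, ← Complex.exp_neg]
      congr 1
      ring
    rw [hc, h2, h1, ← Complex.two_cos, ← Complex.ofReal_cos]
    push_cast
    ring
  have hz1 : h.zeta * h.zeta⁻¹ = 1 := mul_inv_cancel₀ h.zeta_ne_zero
  set u₀ : ZMod q → ℂ := fun j => if j = 0 then 1 else 0 with hu₀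
  -- the vector `W = ρ(a)² u₀ - c • ρ(a) u₀ + u₀` vanishes
  have hW : rhoRep h 1 (aN h) (rhoRep h 1 (aN h) u₀) - c • (rhoRep h 1 (aN h) u₀) + u₀
      = 0 := by
    funext j
    simp only [Pi.add_apply, Pi.sub_apply, Pi.smul_apply, Pi.zero_apply,
      rho_aN_apply, Complex.real_smul]
    by_cases hj : j = (0 : ZMod q)
    · subst hj
      rw [hu₀]
      simp only [ZMod.val_zero, pow_zero, pow_one, mul_one, one_mul, eq_self_iff_true, if_true]
      rw [hcC]
      linear_combination -hz1
    · rw [hu₀]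
      simp only [if_neg hj]
      ring
  have hW' := congrArg e hW
  rw [map_add, map_sub, map_smul, he, he, map_zero] at hW'
  -- evaluate coordinatewise
  have hcoord : ∀ j : ZMod q, (h.zeta ^ (h.s * i ^ j.val) - h.zeta) *
      (h.zeta ^ (h.s * i ^ j.val) - h.zeta⁻¹) * (e u₀) j = 0 := by
    intro j
    have h3 := congrFun hW' j
    simp only [Pi.add_apply, Pi.sub_apply, Pi.smul_apply, Pi.zero_apply,
      rho_aN_apply, Complex.real_smul] at h3
    rw [hcC] at h3
    linear_combination h3 + (e u₀) j * hz1
  have hiq : ((i : ℕ) : ZMod q) = 1 := by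
    have := (ZMod.natCast_eq_natCast_iff _ _ _).mpr h.hmod
    simpa using this
  have hzero : ∀ j : ZMod q, (e u₀) j = 0 := by
    intro j
    have hf1 : h.zeta ^ (h.s * i ^ j.val) - h.zeta ≠ 0 := by
      intro hcon
      have h4 : h.zeta ^ (h.s * i ^ j.val) = h.zeta ^ 1 := by
        rw [pow_one]
        exact sub_eq_zero.mp hcon
      have h6 : h.s * i ^ j.val ≡ 1 [MOD q] :=
        (h.zeta_pow_eq_iff.mp h4).of_mul_left p
      have h7 := (ZMod.natCast_eq_natCast_iff _ _ _).mpr h6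
      push_cast at h7
      rw [h.s_zmod_q, hiq, one_pow] at h7
      have h8 : ((2 : ℕ) : ZMod q) = 0 := by
        push_cast
        linear_combination -h7
      have h9 : q ∣ 2 := (ZMod.natCast_eq_zero_iff _ _).mp h8
      have := Nat.le_of_dvd (by norm_num) h9
      have := h.three_le_q
      omega
    have hf2 : h.zeta ^ (h.s * i ^ j.val) - h.zeta⁻¹ ≠ 0 := by
      intro hcon
      have h4 : h.zeta ^ (h.s * i ^ j.val) = h.zeta⁻¹ := sub_eq_zero.mp hcon
      have h5 : h.zeta ^ (h.s * i ^ j.val + 1) = h.zeta ^ 0 := by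
        rw [pow_add, pow_one, h4, pow_zero]
        exact inv_mul_cancel₀ h.zeta_ne_zero
      have h6 : h.s * i ^ j.val + 1 ≡ 0 [MOD p] :=
        (h.zeta_pow_eq_iff.mp h5).of_mul_right q
      have h7 := (ZMod.natCast_eq_natCast_iff _ _ _).mpr h6
      push_cast at h7
      rw [h.s_zmod_p] at h7
      have h8 : (i : ZMod p) ^ j.val = -1 := by linear_combination h7
      have h9 : (i : ZMod p) ^ (j.val * 2) = 1 := by
        rw [pow_mul, h8]
        ring
      have h10 : q ∣ j.val * 2 := by
        have h10' := orderOf_dvd_of_pow_eq_one h9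
        rwa [h.hord] at h10'
      have h11 : Nat.Coprime q 2 := by
        have h3q := h.three_le_q
        exact (Nat.coprime_primes h.hq Nat.prime_two).mpr (by omega)
      have h12 : q ∣ j.val := h11.dvd_of_dvd_mul_right h10
      have h13 : j.val = 0 := Nat.eq_zero_of_dvd_of_lt h12 (ZMod.val_lt _)
      rw [h13, pow_zero] at h8
      have h14 : ((2 : ℕ) : ZMod p) = 0 := by
        push_cast
        linear_combination h8
      have h15 : p ∣ 2 := (ZMod.natCast_eq_zero_iff _ _).mp h14
      have := Nat.le_of_dvd (by norm_num) h15
      have := h.three_le_p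
      omega
    have := hcoord j
    rcases mul_eq_zero.mp this with h16 | h16
    · rcases mul_eq_zero.mp h16 with h17 | h17
      · exact absurd h17 hf1
      · exact absurd h17 hf2
    · exact h16
  have heu : e u₀ = 0 := funext hzero
  have hu0 : u₀ = 0 := by
    apply e.injective
    rw [heu, map_zero]
  have := congrFun hu0 0
  rw [hu₀] at this
  simp at this

/-- The weak gap condition. -/
theorem weakGap_rho (h : Hyp p q i) (t : ℕ) (ht : Nat.Coprime t (p * q)) :
    WeakGap (rhoRep h t) := by
  haveI := finite_Npq2 h
  haveI : NeZero (p * q) := ⟨h.n_pos.ne'⟩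
  haveI : NeZero q := ⟨h.hq.ne_zero⟩
  rintro P H hPH ⟨ℓ, k, hl, hcard⟩
  by_cases hPbot : P = ⊥
  · subst hPbot
    have hHne : H ≠ ⊥ := by
      intro hcon
      rw [hcon] at hPH
      exact lt_irrefl _ hPH
    obtain ⟨x, hxH, hx1⟩ := (Subgroup.bot_or_exists_ne_one H).resolve_left hHne
    rw [fixed_bot_eq_top h t, finrank_total h]
    by_cases hxr : x.right = 1
    · have hx2 : x.left ≠ 1 := by
        intro hcon
        exact hx1 (SemidirectProduct.ext hcon hxr)
      rw [fixed_eq_bot h ht hxH hxr hx2, finrank_bot]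
      omega
    · have hle2 := fixed_rank_le_two h (t := t) hxH hxr
      have hq3 := h.three_le_q
      omega
  · by_cases hHx : ∃ x ∈ H, x.right = 1 ∧ x.left ≠ 1
    · obtain ⟨x, hxH, hr, hleft⟩ := hHx
      rw [fixed_eq_bot h ht hxH hr hleft, finrank_bot]
      omega
    · push_neg at hHx
      exfalso
      set f := SemidirectProduct.rightHom.comp H.subtype with hf
      have hinj : Function.Injective f := by
        apply (injective_iff_map_eq_one f).mpr
        intro a ha
        have h1 : (a : Npq2 h).right = 1 := ha
        have h2 : (a : Npq2 h).left = 1 := hHx _ a.2 h1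
        have h3 : (a : Npq2 h) = 1 := SemidirectProduct.ext h2 h1
        exact Subtype.ext h3
      have hcardH : Nat.card H ∣ q := by
        have h1 : Nat.card H = Nat.card (MonoidHom.range f) :=
          Nat.card_congr (MonoidHom.ofInjective hinj).toEquiv
        have h2 : Nat.card (MonoidHom.range f) ∣ Nat.card (Multiplicative (ZMod q)) :=
          Subgroup.card_subgroup_dvd_card _
        have h3 : Nat.card (Multiplicative (ZMod q)) = q := by
          rw [Nat.card_congr (Multiplicative.toAdd (α := ZMod q)), Nat.card_zmod]
        rw [h1]
        rw [h3] at h2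
        exact h2
      have hcardP_dvd : Nat.card P ∣ Nat.card H := by
        have e := Subgroup.subgroupOfEquivOfLe hPH.le
        rw [← Nat.card_congr e.toEquiv]
        exact Subgroup.card_subgroup_dvd_card _
      have hP1 : Nat.card P ≠ 1 := fun hcon => hPbot (Subgroup.card_eq_one.mp hcon)
      have hH1 : Nat.card H ≠ 1 := by
        intro hcon
        rw [hcon] at hcardP_dvd
        exact hP1 (Nat.dvd_one.mp hcardP_dvd)
      have hHq : Nat.card H = q :=
        ((Nat.dvd_prime h.hq).mp hcardH).resolve_left hH1
      have hPq : Nat.card P = q := by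
        rw [hHq] at hcardP_dvd
        exact ((Nat.dvd_prime h.hq).mp hcardP_dvd).resolve_left hP1
      have : P = H := Subgroup.eq_of_le_of_card_ge hPH.le (by rw [hHq, hPq])
      exact hPH.ne this

end Statement7

end Mizerka

open Mizerka in
/-- There exist finite-dimensional real representations `U`, `V` of `N_{pq²}`
which are non-isomorphic, `𝒫`-matched, both satisfying the weak gap condition, and with
`dim U^L = dim V^L = 0` for every subgroup `L` containing `⟨a^q⟩`. -/
theorem statement_7 {p q i : ℕ} (h : Hyp p q i) :
    ∃ U V : RealRep (Npq2 h),
      FiniteDimensional ℝ U.carrier ∧ FiniteDimensional ℝ V.carrier ∧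
      ¬ RepIso U.rho V.rho ∧
      PMatched U.rho V.rho ∧
      WeakGap U.rho ∧ WeakGap V.rho ∧
      ∀ L : Subgroup (Npq2 h), Subgroup.zpowers ((aN h) ^ q) ≤ L →
        Module.finrank ℝ (fixedPts U.rho L) = 0 ∧
        Module.finrank ℝ (fixedPts V.rho L) = 0 := by
  haveI : NeZero (p * q) := ⟨h.n_pos.ne'⟩
  haveI : NeZero q := ⟨h.hq.ne_zero⟩
  refine ⟨{ carrier := ZMod q → ℂ, rho := rhoRep h 1 },
    { carrier := ZMod q → ℂ, rho := rhoRep h h.s }, ?_, ?_, ?_, ?_, ?_, ?_, ?_⟩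
  · exact inferInstance
  · exact inferInstance
  · exact not_repIso h
  · exact pmatched_rho h
  · exact weakGap_rho h 1 (Nat.coprime_one_left _)
  · exact weakGap_rho h h.s h.coprime_s_n
  · intro L hL
    have hmem : (aN h) ^ q ∈ L := hL (Subgroup.mem_zpowers _)
    have hpow : (aN h) ^ q = SemidirectProduct.inl ((ofAdd (1 : ZMod (p * q))) ^ q) := by
      rw [aN, ← map_pow]
    have hr : ((aN h) ^ q).right = 1 := by
      rw [hpow, SemidirectProduct.right_inl]
    have hleft : ((aN h) ^ q).left ≠ 1 := by
      rw [hpow, SemidirectProduct.left_inl]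
      intro hcon
      have h1 : toAdd ((ofAdd (1 : ZMod (p * q))) ^ q) = ((q : ℕ) : ZMod (p * q)) := by
        rw [toAdd_pow, toAdd_ofAdd, nsmul_eq_mul, mul_one]
      rw [hcon, toAdd_one] at h1
      have h3 : (p * q) ∣ q := (ZMod.natCast_eq_zero_iff _ _).mp h1.symm
      have h4 := Nat.le_of_dvd h.hq.pos h3
      have h5 := h.three_le_p
      have h6 := h.hq.pos
      nlinarith
    constructor
    · rw [fixed_eq_bot h (Nat.coprime_one_left _) hmem hr hleft, finrank_bot]
    · rw [fixed_eq_bot h h.coprime_s_n hmem hr hleft, finrank_bot]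
end

section
/- Let l be an integer with p ∤ l and q ∤ l, and set n = (a^l, 1) ∈ G_{p,q}. Then: (1) n has order pq; (2) the conjugacy class of n in G_{p,q} equals {(a^{l i^m}, 1), (a^{−l i^m}, 1) : 0 ≤ m ≤ q−1} and has exactly 2q elements; (3) n is conjugate to n^{−1} in G_{p,q} but n is not conjugate to n^{−1} in the index-2 subgroup N_{pq²} = {(a^l, c^m)}; (4) the real conjugacy class of n in G_{p,q} coincides with the real conjugacy class of n in N_{pq²}, i.e. (n)^±_{G_{p,q}} = (n)^±_{N_{pq²}}. Consequently, for every element n of N_{pq²} whose order is not a prime power, (n)^±_{G_{p,q}} = (n)^±_{N_{pq²}}. -/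
open Multiplicative

namespace Mizerka

variable {p q i : ℕ}

section Aux

variable {p q i : ℕ}

theorem unit_pow_val (h : Hyp p q i) (m : ℕ) :
    ((h.unit ^ m : (ZMod (p * q))ˣ) : ZMod (p * q)) = (i : ZMod (p * q)) ^ m := by
  rw [Units.val_pow_eq_pow_val, Hyp.unit, ZMod.coe_unitOfCoprime]

theorem inl_eq_mk (h : Hyp p q i) (x : DihedralGroup (p * q)) :
    (SemidirectProduct.inl x : Gpq h) = ⟨x, 1⟩ := rfl

theorem conj_inl (h : Hyp p q i) (g : Gpq h) (x : DihedralGroup (p * q)) :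
    g * ⟨x, 1⟩ * g⁻¹ = ⟨g.left * h.phiG g.right x * g.left⁻¹, 1⟩ := by
  apply SemidirectProduct.ext
  · simp only [SemidirectProduct.mul_left, SemidirectProduct.inv_left,
      SemidirectProduct.mul_right, map_inv, map_mul, mul_one]
    rw [MulAut.apply_inv_self]
  · simp [SemidirectProduct.mul_right, SemidirectProduct.inv_right]

theorem conj_r_r (h : Hyp p q i) (j L : ZMod (p * q)) (z : Multiplicative (ZMod q)) :
    (⟨DihedralGroup.r j, z⟩ : Gpq h) * ⟨DihedralGroup.r L, 1⟩
        * (⟨DihedralGroup.r j, z⟩ : Gpq h)⁻¹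
      = ⟨DihedralGroup.r ((i : ZMod (p * q)) ^ (Multiplicative.toAdd z).val * L), 1⟩ := by
  rw [conj_inl]
  congr 1
  show DihedralGroup.r j * h.phiG z (DihedralGroup.r L) * (DihedralGroup.r j)⁻¹ = _
  rw [h.phiG_r, r_inv, DihedralGroup.r_mul_r, DihedralGroup.r_mul_r, unit_pow_val]
  congr 1
  ring

theorem conj_r_sr (h : Hyp p q i) (j L : ZMod (p * q)) (z : Multiplicative (ZMod q)) :
    (⟨DihedralGroup.sr j, z⟩ : Gpq h) * ⟨DihedralGroup.r L, 1⟩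
        * (⟨DihedralGroup.sr j, z⟩ : Gpq h)⁻¹
      = ⟨DihedralGroup.r (-((i : ZMod (p * q)) ^ (Multiplicative.toAdd z).val * L)), 1⟩ := by
  rw [conj_inl]
  congr 1
  show DihedralGroup.sr j * h.phiG z (DihedralGroup.r L) * (DihedralGroup.sr j)⁻¹ = _
  have hsr : (DihedralGroup.sr j : DihedralGroup (p * q))⁻¹ = DihedralGroup.sr j := by
    rw [eq_comm, eq_inv_iff_mul_eq_one, DihedralGroup.sr_mul_self]
  rw [h.phiG_r, hsr, DihedralGroup.sr_mul_r, DihedralGroup.sr_mul_sr, unit_pow_val]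
  congr 1
  ring


theorem cast_key (l m : ℕ) :
    (i : ZMod (p * q)) ^ m * (l : ZMod (p * q)) = ((l * i ^ m : ℕ) : ZMod (p * q)) := by
  push_cast; ring

theorem q_not_dvd_two (h : Hyp p q i) : ¬ q ∣ 2 := by
  intro hd
  have h2 := (Nat.prime_dvd_prime_iff_eq h.hq Nat.prime_two).mp hd
  have h3 := Nat.odd_iff.mp h.hoddq
  omega

theorem key_A (h : Hyp p q i) {l : ℕ} (hpl : ¬ p ∣ l) {m m' : ℕ} (hm : m < q) (hm' : m' < q)
    (heq : ((l * i ^ m : ℕ) : ZMod (p * q)) = ((l * i ^ m' : ℕ) : ZMod (p * q))) : m = m' := by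
  haveI : NeZero p := ⟨h.hp.ne_zero⟩
  haveI : Fact p.Prime := ⟨h.hp⟩
  have hf := congrArg (ZMod.castHom (dvd_mul_right p q) (ZMod p)) heq
  rw [map_natCast, map_natCast] at hf
  push_cast at hf
  have hl0 : (l : ZMod p) ≠ 0 := fun h0 => hpl ((ZMod.natCast_eq_zero_iff l p).mp h0)
  have hpow : (i : ZMod p) ^ m = (i : ZMod p) ^ m' := mul_left_cancel₀ hl0 hf
  have hupow : h.unitP ^ m = h.unitP ^ m' := by
    apply Units.ext
    simpa [Hyp.unitP, ZMod.coe_unitOfCoprime] using hpow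
  have hmodEq := pow_eq_pow_iff_modEq.mp hupow
  have hord' : orderOf h.unitP = q := by
    rw [← orderOf_units, Hyp.unitP, ZMod.coe_unitOfCoprime, h.hord]
  rw [hord'] at hmodEq
  have h1 : m % q = m' % q := hmodEq
  rwa [Nat.mod_eq_of_lt hm, Nat.mod_eq_of_lt hm'] at h1

theorem key_B (h : Hyp p q i) {l : ℕ} (hql : ¬ q ∣ l) (m m' : ℕ) :
    ((l * i ^ m : ℕ) : ZMod (p * q)) ≠ -((l * i ^ m' : ℕ) : ZMod (p * q)) := by
  intro heq
  haveI : NeZero q := ⟨h.hq.ne_zero⟩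
  have hf := congrArg (ZMod.castHom (dvd_mul_left q p) (ZMod q)) heq
  rw [map_natCast, map_neg, map_natCast] at hf
  have hi1 : (i : ZMod q) = 1 := by
    have := (ZMod.natCast_eq_natCast_iff i 1 q).mpr h.hmod
    simpa using this
  push_cast at hf
  rw [hi1] at hf
  simp only [one_pow, mul_one] at hf
  have h2 : ((2 * l : ℕ) : ZMod q) = 0 := by
    push_cast
    rw [two_mul]
    rw [eq_neg_iff_add_eq_zero] at hf
    exact hf
  have hdvd := (ZMod.natCast_eq_zero_iff (2 * l) q).mp h2
  rcases (Nat.Prime.dvd_mul h.hq).mp hdvd with h2' | hl'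
  · exact q_not_dvd_two h h2'
  · exact hql hl'

theorem conjClass_n (h : Hyp p q i) (l : ℕ) :
    {x : Gpq h | IsConj (⟨DihedralGroup.r (l : ZMod (p * q)), 1⟩ : Gpq h) x} =
      {x : Gpq h | ∃ m : ℕ, m < q ∧
        (x = ⟨DihedralGroup.r ((l * i ^ m : ℕ) : ZMod (p * q)), 1⟩ ∨
         x = ⟨DihedralGroup.r (-((l * i ^ m : ℕ) : ZMod (p * q))), 1⟩)} := by
  haveI : NeZero q := ⟨h.hq.ne_zero⟩
  ext x
  simp only [Set.mem_setOf_eq, isConj_iff]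
  constructor
  · rintro ⟨⟨gl, gr⟩, hg⟩
    cases gl with
    | r j =>
      rw [conj_r_r] at hg
      exact ⟨(Multiplicative.toAdd gr).val, ZMod.val_lt _, Or.inl (by rw [← hg, cast_key])⟩
    | sr j =>
      rw [conj_r_sr] at hg
      exact ⟨(Multiplicative.toAdd gr).val, ZMod.val_lt _, Or.inr (by rw [← hg, cast_key])⟩
  · rintro ⟨m, hm, hx | hx⟩
    · refine ⟨⟨DihedralGroup.r 0, Multiplicative.ofAdd (m : ZMod q)⟩, ?_⟩
      rw [conj_r_r, hx]
      congr 2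
      rw [toAdd_ofAdd, ZMod.val_natCast_of_lt hm, cast_key]
    · refine ⟨⟨DihedralGroup.sr 0, Multiplicative.ofAdd (m : ZMod q)⟩, ?_⟩
      rw [conj_r_sr, hx]
      congr 2
      rw [toAdd_ofAdd, ZMod.val_natCast_of_lt hm, cast_key]


theorem inv_mk (h : Hyp p q i) (L : ZMod (p * q)) :
    (⟨DihedralGroup.r L, 1⟩ : Gpq h)⁻¹ = ⟨DihedralGroup.r (-L), 1⟩ := by
  rw [← inl_eq_mk, ← inl_eq_mk, ← map_inv, r_inv]

theorem orderOf_n (h : Hyp p q i) (l : ℕ) (hpl : ¬ p ∣ l) (hql : ¬ q ∣ l) :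
    orderOf (⟨DihedralGroup.r (l : ZMod (p * q)), 1⟩ : Gpq h) = p * q := by
  haveI : NeZero (p * q) := ⟨mul_ne_zero h.hp.ne_zero h.hq.ne_zero⟩
  rw [← inl_eq_mk, orderOf_injective _ SemidirectProduct.inl_injective,
    DihedralGroup.orderOf_r]
  have hval : ((l : ZMod (p * q))).val = l % (p * q) := ZMod.val_natCast (p * q) l
  have hco : Nat.Coprime (p * q) l :=
    Nat.Coprime.mul ((Nat.Prime.coprime_iff_not_dvd h.hp).mpr hpl)
      ((Nat.Prime.coprime_iff_not_dvd h.hq).mpr hql)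
  have hgcd : Nat.gcd (p * q) (((l : ZMod (p * q))).val) = 1 := by
    rw [hval, Nat.gcd_comm, ← Nat.gcd_rec]
    exact hco
  rw [hgcd, Nat.div_one]

theorem isConj_n_inv (h : Hyp p q i) (l : ℕ) :
    IsConj (⟨DihedralGroup.r (l : ZMod (p * q)), 1⟩ : Gpq h)
      (⟨DihedralGroup.r (l : ZMod (p * q)), 1⟩ : Gpq h)⁻¹ := by
  rw [isConj_iff, inv_mk]
  refine ⟨⟨DihedralGroup.sr 0, 1⟩, ?_⟩
  rw [conj_r_sr]
  congr 2
  rw [toAdd_one, ZMod.val_zero, pow_zero, one_mul]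

theorem not_conj_NSub (h : Hyp p q i) (l : ℕ) (hql : ¬ q ∣ l) :
    ¬ ∃ z ∈ NSub h, z * (⟨DihedralGroup.r (l : ZMod (p * q)), 1⟩ : Gpq h) * z⁻¹ =
      (⟨DihedralGroup.r (l : ZMod (p * q)), 1⟩ : Gpq h)⁻¹ := by
  rintro ⟨⟨zl, zr⟩, ⟨j, hj⟩, hz⟩
  have hzl : zl = DihedralGroup.r j := hj
  subst hzl
  rw [conj_r_r, inv_mk] at hz
  have hr : (i : ZMod (p * q)) ^ (Multiplicative.toAdd zr).val * (l : ZMod (p * q))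
      = -(l : ZMod (p * q)) := by
    have := congrArg SemidirectProduct.left hz
    simpa using this
  rw [cast_key] at hr
  have hl' : -((l : ℕ) : ZMod (p * q)) = -(((l * i ^ 0 : ℕ) : ZMod (p * q))) := by
    norm_num
  rw [hl'] at hr
  exact key_B h hql _ 0 hr

theorem realClass_n (h : Hyp p q i) (l : ℕ) (hpl : ¬ p ∣ l) (hql : ¬ q ∣ l) :
    realClass (⟨DihedralGroup.r (l : ZMod (p * q)), 1⟩ : Gpq h) =
      {x : Gpq h | ∃ z ∈ NSub h,
        x = z * (⟨DihedralGroup.r (l : ZMod (p * q)), 1⟩ : Gpq h) * z⁻¹ ∨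
        x = z * (⟨DihedralGroup.r (l : ZMod (p * q)), 1⟩ : Gpq h)⁻¹ * z⁻¹} := by
  haveI : NeZero q := ⟨h.hq.ne_zero⟩
  set n : Gpq h := ⟨DihedralGroup.r (l : ZMod (p * q)), 1⟩ with hn
  have hconj := isConj_n_inv h l
  have hlhs : realClass n = {x : Gpq h | IsConj n x} := by
    ext x
    simp only [realClass, Set.mem_setOf_eq]
    constructor
    · rintro (hx | hx)
      · exact hx
      · exact hconj.trans hx
    · intro hx
      exact Or.inl hx
  rw [hlhs, conjClass_n]
  ext x
  simp only [Set.mem_setOf_eq]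
  constructor
  · rintro ⟨m, hm, hx | hx⟩
    · refine ⟨⟨DihedralGroup.r 0, Multiplicative.ofAdd (m : ZMod q)⟩, ⟨0, rfl⟩, Or.inl ?_⟩
      rw [hn, conj_r_r, hx]
      congr 2
      rw [toAdd_ofAdd, ZMod.val_natCast_of_lt hm, cast_key]
    · refine ⟨⟨DihedralGroup.r 0, Multiplicative.ofAdd (m : ZMod q)⟩, ⟨0, rfl⟩, Or.inr ?_⟩
      rw [hn, inv_mk, conj_r_r, hx]
      congr 2
      rw [toAdd_ofAdd, ZMod.val_natCast_of_lt hm, mul_neg, cast_key]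
  · rintro ⟨⟨zl, zr⟩, ⟨j, hj⟩, (rfl | rfl)⟩
    · have hzl : zl = DihedralGroup.r j := hj
      subst hzl
      rw [hn, conj_r_r]
      exact ⟨(Multiplicative.toAdd zr).val, ZMod.val_lt _, Or.inl (by rw [cast_key])⟩
    · have hzl : zl = DihedralGroup.r j := hj
      subst hzl
      rw [hn, inv_mk, conj_r_r]
      refine ⟨(Multiplicative.toAdd zr).val, ZMod.val_lt _, Or.inr ?_⟩
      rw [mul_neg, cast_key]


theorem card_class (h : Hyp p q i) (l : ℕ) (hpl : ¬ p ∣ l) (hql : ¬ q ∣ l) :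
    Nat.card {x : Gpq h | IsConj (⟨DihedralGroup.r (l : ZMod (p * q)), 1⟩ : Gpq h) x}
      = 2 * q := by
  haveI : NeZero q := ⟨h.hq.ne_zero⟩
  rw [conjClass_n]
  set f : Bool × Fin q → Gpq h := fun bm =>
    if bm.1 then (⟨DihedralGroup.r ((l * i ^ (bm.2 : ℕ) : ℕ) : ZMod (p * q)), 1⟩ : Gpq h)
    else ⟨DihedralGroup.r (-((l * i ^ (bm.2 : ℕ) : ℕ) : ZMod (p * q))), 1⟩ with hf
  have hrange : {x : Gpq h | ∃ m : ℕ, m < q ∧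
      (x = ⟨DihedralGroup.r ((l * i ^ m : ℕ) : ZMod (p * q)), 1⟩ ∨
       x = ⟨DihedralGroup.r (-((l * i ^ m : ℕ) : ZMod (p * q))), 1⟩)} = Set.range f := by
    ext x
    simp only [Set.mem_setOf_eq, Set.mem_range]
    constructor
    · rintro ⟨m, hm, hx | hx⟩
      · exact ⟨(true, ⟨m, hm⟩), by simp [hf, hx]⟩
      · exact ⟨(false, ⟨m, hm⟩), by simp [hf, hx]⟩
    · rintro ⟨⟨b, m⟩, rfl⟩
      cases b
      · exact ⟨(m : ℕ), m.isLt, Or.inr (by simp [hf])⟩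
      · exact ⟨(m : ℕ), m.isLt, Or.inl (by simp [hf])⟩
  have hinj : Function.Injective f := by
    rintro ⟨b, m⟩ ⟨b', m'⟩ heq
    have hleft := congrArg (fun x : Gpq h => x.left) heq
    cases b <;> cases b' <;> simp only [hf, if_true, if_false, Bool.false_eq_true] at hleft
    · have := DihedralGroup.r.inj hleft
      have h1 : -((l * i ^ (m : ℕ) : ℕ) : ZMod (p * q)) = -((l * i ^ (m' : ℕ) : ℕ) : ZMod (p * q)) := this
      have h2 := neg_injective h1
      have := key_A h hpl m.isLt m'.isLt h2
      simp [Prod.ext_iff, Fin.ext_iff, this]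
    · have := DihedralGroup.r.inj hleft
      exact absurd this.symm (by
        intro hh
        exact key_B h hql (m' : ℕ) (m : ℕ) hh)
    · have := DihedralGroup.r.inj hleft
      exact absurd this (key_B h hql (m : ℕ) (m' : ℕ))
    · have := DihedralGroup.r.inj hleft
      have := key_A h hpl m.isLt m'.isLt this
      simp [Prod.ext_iff, Fin.ext_iff, this]
  rw [hrange, Nat.card_range_of_injective hinj]
  simp [Nat.card_eq_fintype_card, two_mul]

theorem pow_mk (h : Hyp p q i) (j : ZMod (p * q)) (z : Multiplicative (ZMod q)) (k : ℕ) :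
    (⟨DihedralGroup.r j, z⟩ : Gpq h) ^ k =
      ⟨DihedralGroup.r
        ((∑ t ∈ Finset.range k, ((i : ZMod (p * q)) ^ (Multiplicative.toAdd z).val) ^ t) * j),
        z ^ k⟩ := by
  induction k with
  | zero =>
    apply SemidirectProduct.ext <;> simp [DihedralGroup.one_def, -DihedralGroup.r_zero]
  | succ k ih =>
    rw [pow_succ', ih]
    apply SemidirectProduct.ext
    · show DihedralGroup.r j * h.phiG z (DihedralGroup.r _) = _
      rw [h.phiG_r, DihedralGroup.r_mul_r, unit_pow_val, geom_sum_succ]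
      congr 1
      ring
    · show z * z ^ k = z ^ (k + 1)
      rw [pow_succ']

theorem geom_vanish (h : Hyp p q i) {s : ℕ} (hs : s ≠ 0) (hs' : s < q) :
    (∑ t ∈ Finset.range q, ((i : ZMod (p * q)) ^ s) ^ t) = 0 := by
  haveI : NeZero p := ⟨h.hp.ne_zero⟩
  haveI : NeZero q := ⟨h.hq.ne_zero⟩
  haveI : Fact p.Prime := ⟨h.hp⟩
  haveI : NeZero (p * q) := ⟨mul_ne_zero h.hp.ne_zero h.hq.ne_zero⟩
  set G : ZMod (p * q) := ∑ t ∈ Finset.range q, ((i : ZMod (p * q)) ^ s) ^ t with hG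
  have hp0 : (ZMod.castHom (dvd_mul_right p q) (ZMod p)) G = 0 := by
    rw [hG, map_sum]
    simp only [map_pow, map_natCast]
    set w : ZMod p := (i : ZMod p) ^ s with hw
    have hw1 : w - 1 ≠ 0 := by
      rw [sub_ne_zero]
      intro hww
      have := orderOf_dvd_of_pow_eq_one hww
      rw [h.hord] at this
      exact hs (Nat.eq_zero_of_dvd_of_lt this hs')
    have hwq : w ^ q = 1 := by
      rw [hw, ← pow_mul, mul_comm s q, pow_mul, ← h.hord, pow_orderOf_eq_one, one_pow]
    have := geom_sum_mul w q
    rw [hwq, sub_self] at this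
    rcases mul_eq_zero.mp this with h0 | h0
    · exact h0
    · exact absurd h0 hw1
  have hq0 : (ZMod.castHom (dvd_mul_left q p) (ZMod q)) G = 0 := by
    rw [hG, map_sum]
    simp only [map_pow, map_natCast]
    have hi1 : (i : ZMod q) = 1 := by
      have := (ZMod.natCast_eq_natCast_iff i 1 q).mpr h.hmod
      simpa using this
    simp [hi1, Finset.sum_const, ZMod.natCast_self]
  have hval : G = ((G.val : ℕ) : ZMod (p * q)) := by
    simp [ZMod.natCast_val, ZMod.cast_id]
  have hpdvd : p ∣ G.val := by
    have := hp0
    rw [hval, map_natCast] at this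
    exact (ZMod.natCast_eq_zero_iff _ p).mp this
  have hqdvd : q ∣ G.val := by
    have := hq0
    rw [hval, map_natCast] at this
    exact (ZMod.natCast_eq_zero_iff _ q).mp this
  have hpq : p * q ∣ G.val :=
    Nat.Coprime.mul_dvd_of_dvd_of_dvd
      ((Nat.coprime_primes h.hp h.hq).mpr (by
        intro hpq'
        have h1 : 0 < p - 1 := by have := h.hp.two_le; omega
        have := Nat.le_of_dvd h1 h.hdvd
        omega)) hpdvd hqdvd
  rw [hval]
  exact (ZMod.natCast_eq_zero_iff _ _).mpr hpq


theorem pow_q_eq_one (h : Hyp p q i) (j : ZMod (p * q)) {zr : Multiplicative (ZMod q)}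
    (hzr : zr ≠ 1) : (⟨DihedralGroup.r j, zr⟩ : Gpq h) ^ q = 1 := by
  haveI : NeZero q := ⟨h.hq.ne_zero⟩
  have hs0 : (Multiplicative.toAdd zr).val ≠ 0 := by
    intro h0
    apply hzr
    have : Multiplicative.toAdd zr = 0 := (ZMod.val_eq_zero _).mp h0
    rw [← ofAdd_toAdd zr, this, ofAdd_zero]
  have hslt : (Multiplicative.toAdd zr).val < q := ZMod.val_lt _
  have hzrq : zr ^ q = 1 := by
    conv_lhs => rw [← ofAdd_toAdd zr]
    rw [← ofAdd_nsmul, nsmul_eq_mul, ZMod.natCast_self, zero_mul, ofAdd_zero]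
  rw [pow_mk, geom_vanish h hs0 hslt, zero_mul, hzrq]
  apply SemidirectProduct.ext <;> simp [DihedralGroup.one_def, -DihedralGroup.r_zero]

theorem final_piece (h : Hyp p q i) :
    ∀ m : Gpq h, m ∈ NSub h → (¬ ∃ ℓ k : ℕ, Nat.Prime ℓ ∧ orderOf m = ℓ ^ k) →
      realClass m = {x : Gpq h | ∃ z ∈ NSub h, x = z * m * z⁻¹ ∨ x = z * m⁻¹ * z⁻¹} := by
  rintro ⟨ml, mr⟩ ⟨j, hj⟩ hnp
  have hml : ml = DihedralGroup.r j := hj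
  subst hml
  haveI : NeZero (p * q) := ⟨mul_ne_zero h.hp.ne_zero h.hq.ne_zero⟩
  by_cases hzr : mr = 1
  · subst hzr
    have hord : orderOf (⟨DihedralGroup.r j, 1⟩ : Gpq h) = (p * q) / Nat.gcd (p * q) j.val := by
      rw [← inl_eq_mk, orderOf_injective _ SemidirectProduct.inl_injective,
        DihedralGroup.orderOf_r]
    have hpj : ¬ p ∣ j.val := by
      intro hd
      have hpd : p ∣ Nat.gcd (p * q) j.val := Nat.dvd_gcd (dvd_mul_right p q) hd
      obtain ⟨e, he⟩ := hpd
      have hdpq : Nat.gcd (p * q) j.val ∣ p * q := Nat.gcd_dvd_left _ _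
      rw [he] at hdpq
      have heq : e ∣ q := (Nat.mul_dvd_mul_iff_left h.hp.pos).mp hdpq
      have hdivq : orderOf (⟨DihedralGroup.r j, 1⟩ : Gpq h) ∣ q := by
        rw [hord, he, Nat.mul_div_mul_left _ _ h.hp.pos]
        exact Nat.div_dvd_of_dvd heq
      rcases h.hq.eq_one_or_self_of_dvd _ hdivq with h1 | h1
      · exact hnp ⟨q, 0, h.hq, by rw [h1, pow_zero]⟩
      · exact hnp ⟨q, 1, h.hq, by rw [h1, pow_one]⟩
    have hqj : ¬ q ∣ j.val := by
      intro hd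
      have hqd : q ∣ Nat.gcd (p * q) j.val := Nat.dvd_gcd (dvd_mul_left q p) hd
      obtain ⟨e, he⟩ := hqd
      have hdpq : Nat.gcd (p * q) j.val ∣ p * q := Nat.gcd_dvd_left _ _
      rw [he, mul_comm p q] at hdpq
      have heq : e ∣ p := (Nat.mul_dvd_mul_iff_left h.hq.pos).mp hdpq
      have harith : p * q / (q * e) = p / e := by
        rw [mul_comm p q, Nat.mul_div_mul_left _ _ h.hq.pos]
      have hdivp : orderOf (⟨DihedralGroup.r j, 1⟩ : Gpq h) ∣ p := by
        rw [hord, he, harith]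
        exact Nat.div_dvd_of_dvd heq
      rcases h.hp.eq_one_or_self_of_dvd _ hdivp with h1 | h1
      · exact hnp ⟨p, 0, h.hp, by rw [h1, pow_zero]⟩
      · exact hnp ⟨p, 1, h.hp, by rw [h1, pow_one]⟩
    have hcast : ((j.val : ℕ) : ZMod (p * q)) = j := by
      simp [ZMod.natCast_val, ZMod.cast_id]
    have hres := realClass_n h j.val hpj hqj
    rw [hcast] at hres
    exact hres
  · exfalso
    have hdvd : orderOf (⟨DihedralGroup.r j, mr⟩ : Gpq h) ∣ q :=
      orderOf_dvd_of_pow_eq_one (pow_q_eq_one h j hzr)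
    rcases h.hq.eq_one_or_self_of_dvd _ hdvd with h1 | h1
    · exact hnp ⟨q, 0, h.hq, by rw [h1, pow_zero]⟩
    · exact hnp ⟨q, 1, h.hq, by rw [h1, pow_one]⟩

end Aux
end Mizerka

open Mizerka Multiplicative in
/-- For `n = (aˡ, 1)` with `p ∤ l`, `q ∤ l`: `n` has order `pq`; its
conjugacy class in `G_{p,q}` is `{(a^{±l iᵐ}, 1)}` of size `2q`; `n` is conjugate to `n⁻¹`
in `G_{p,q}` but not in `N_{pq²}`; and the real conjugacy classes of `n` in `G_{p,q}` and
in `N_{pq²}` coincide. Consequently the latter holds for every element of `N_{pq²}` whose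
order is not a prime power. -/
theorem statement_10 {p q i : ℕ} (h : Hyp p q i) (l : ℕ) (hpl : ¬ p ∣ l) (hql : ¬ q ∣ l) :
    let n : Gpq h := ⟨DihedralGroup.r (l : ZMod (p * q)), 1⟩
    orderOf n = p * q ∧
    ({x : Gpq h | IsConj n x} =
      {x : Gpq h | ∃ m : ℕ, m < q ∧
        (x = ⟨DihedralGroup.r ((l * i ^ m : ℕ) : ZMod (p * q)), 1⟩ ∨
         x = ⟨DihedralGroup.r (-((l * i ^ m : ℕ) : ZMod (p * q))), 1⟩)}) ∧
    Nat.card {x : Gpq h | IsConj n x} = 2 * q ∧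
    IsConj n n⁻¹ ∧
    (¬ ∃ z ∈ NSub h, z * n * z⁻¹ = n⁻¹) ∧
    (realClass n = {x : Gpq h | ∃ z ∈ NSub h, x = z * n * z⁻¹ ∨ x = z * n⁻¹ * z⁻¹}) ∧
    (∀ m : Gpq h, m ∈ NSub h → (¬ ∃ ℓ k : ℕ, Nat.Prime ℓ ∧ orderOf m = ℓ ^ k) →
      realClass m = {x : Gpq h | ∃ z ∈ NSub h, x = z * m * z⁻¹ ∨ x = z * m⁻¹ * z⁻¹}) := by
  intro n
  exact ⟨orderOf_n h l hpl hql, conjClass_n h l, card_class h l hpl hql, isConj_n_inv h l,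
    not_conj_NSub h l hql, realClass_n h l hpl hql, final_piece h⟩
end

section
/- The following quotient isomorphisms hold: G_{p,q}/N¹_{pq} ≅ C_{2q} (the cyclic group of order 2q), G_{p,q}/N²_{pq} ≅ D_{2q} (the dihedral group of order 2q), and G_{p,q}/N_p ≅ C_q × D_{2q}. -/
open Multiplicative

namespace Mizerka

variable {p q i : ℕ}

theorem dihedralAut_pow_sr (n : ℕ) (u : (ZMod n)ˣ) (k : ℕ) (m : ZMod n) :
    ((dihedralAut n u) ^ k) (DihedralGroup.sr m)
      = DihedralGroup.sr (((u ^ k : (ZMod n)ˣ) : ZMod n) * m) := by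
  induction k generalizing m with
  | zero => simp
  | succ k ih =>
    rw [pow_succ, MulAut.mul_apply]
    have h1 : (dihedralAut n u) (DihedralGroup.sr m) = DihedralGroup.sr ((u : ZMod n) * m) := rfl
    rw [h1, ih, pow_succ, Units.val_mul, mul_assoc]

theorem Hyp.phiG_sr (h : Hyp p q i) (z : Multiplicative (ZMod q)) (m : ZMod (p * q)) :
    h.phiG z (DihedralGroup.sr m)
      = DihedralGroup.sr (((h.unit ^ (toAdd z).val : (ZMod (p * q))ˣ) : ZMod (p * q)) * m) := by
  have h1 : h.phiG z = (dihedralAut (p * q) h.unit) ^ (toAdd z).val := rfl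
  rw [h1, dihedralAut_pow_sr]

/-- The reduction map on dihedral groups induced by `ZMod n → ZMod m`. -/
def dihedralCastFun {m n : ℕ} (hd : m ∣ n) : DihedralGroup n → DihedralGroup m
  | .r j => .r (ZMod.castHom hd (ZMod m) j)
  | .sr j => .sr (ZMod.castHom hd (ZMod m) j)

def dihedralCastHom {m n : ℕ} (hd : m ∣ n) : DihedralGroup n →* DihedralGroup m where
  toFun := dihedralCastFun hd
  map_one' := by rw [DihedralGroup.one_def]; simp only [dihedralCastFun, map_zero, DihedralGroup.one_def]
  map_mul' x y := by
    cases x <;> cases y <;>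
      simp [dihedralCastFun, DihedralGroup.r_mul_r, DihedralGroup.r_mul_sr,
        DihedralGroup.sr_mul_r, DihedralGroup.sr_mul_sr, map_add, map_sub]

theorem dihedralCastHom_r {m n : ℕ} (hd : m ∣ n) (j : ZMod n) :
    dihedralCastHom hd (DihedralGroup.r j) = DihedralGroup.r (ZMod.castHom hd (ZMod m) j) := rfl

theorem dihedralCastHom_sr {m n : ℕ} (hd : m ∣ n) (j : ZMod n) :
    dihedralCastHom hd (DihedralGroup.sr j) = DihedralGroup.sr (ZMod.castHom hd (ZMod m) j) := rfl

/-- The sign of a dihedral group element: rotations map to `1`. -/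
def dihedralSgnFun {n : ℕ} : DihedralGroup n → Multiplicative (ZMod 2)
  | .r _ => 1
  | .sr _ => ofAdd 1

def dihedralSgn (n : ℕ) : DihedralGroup n →* Multiplicative (ZMod 2) where
  toFun := dihedralSgnFun
  map_one' := by rw [DihedralGroup.one_def]; rfl
  map_mul' x y := by
    cases x <;> cases y <;>
      simp [dihedralSgnFun, DihedralGroup.r_mul_r, DihedralGroup.r_mul_sr,
        DihedralGroup.sr_mul_r, DihedralGroup.sr_mul_sr] <;> decide

theorem Hyp.cast_unit_pow (h : Hyp p q i) (k : ℕ) :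
    (ZMod.castHom (dvd_mul_left q p) (ZMod q))
      ((h.unit ^ k : (ZMod (p * q))ˣ) : ZMod (p * q)) = 1 := by
  have hi : ((i : ℕ) : ZMod q) = 1 := by
    have := (ZMod.natCast_eq_natCast_iff i 1 q).mpr h.hmod
    simpa using this
  have hu : ((h.unit : ZMod (p * q))) = (i : ZMod (p * q)) := rfl
  rw [Units.val_pow_eq_pow_val, hu, map_pow, map_natCast, hi, one_pow]

theorem Hyp.pi_phiG (h : Hyp p q i) (z : Multiplicative (ZMod q)) (x : DihedralGroup (p * q)) :
    dihedralCastHom (dvd_mul_left q p) (h.phiG z x) = dihedralCastHom (dvd_mul_left q p) x := by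
  cases x with
  | r m => rw [h.phiG_r, dihedralCastHom_r, dihedralCastHom_r, map_mul, h.cast_unit_pow, one_mul]
  | sr m => rw [h.phiG_sr, dihedralCastHom_sr, dihedralCastHom_sr, map_mul, h.cast_unit_pow, one_mul]

theorem Hyp.sgn_phiG (h : Hyp p q i) (z : Multiplicative (ZMod q)) (x : DihedralGroup (p * q)) :
    dihedralSgn (p * q) (h.phiG z x) = dihedralSgn (p * q) x := by
  cases x with
  | r m => rw [h.phiG_r]; rfl
  | sr m => rw [h.phiG_sr]; rfl

theorem cast_eq_zero_iff_exists (hp0 : p ≠ 0) (hq0 : q ≠ 0) (l : ZMod (p * q)) :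
    ZMod.castHom (dvd_mul_left q p) (ZMod q) l = 0 ↔
      ∃ s : ZMod (p * q), l = (q : ZMod (p * q)) * s := by
  haveI : NeZero (p * q) := ⟨mul_ne_zero hp0 hq0⟩
  constructor
  · intro h0
    rw [ZMod.castHom_apply, ← ZMod.natCast_val, ZMod.natCast_eq_zero_iff] at h0
    obtain ⟨t, ht⟩ := h0
    refine ⟨(t : ZMod (p * q)), ?_⟩
    calc l = ((l.val : ℕ) : ZMod (p * q)) := (ZMod.natCast_rightInverse l).symm
      _ = ((q * t : ℕ) : ZMod (p * q)) := by rw [← ht]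
      _ = (q : ZMod (p * q)) * t := by push_cast; ring
  · rintro ⟨s, rfl⟩
    rw [map_mul, map_natCast, ZMod.natCast_self, zero_mul]

/-- The projection `G_{p,q} → D_{2q}`, `(x, cᵐ) ↦ x mod q`. -/
def piHom (h : Hyp p q i) : Gpq h →* DihedralGroup q where
  toFun z := dihedralCastHom (dvd_mul_left q p) z.left
  map_one' := by simp
  map_mul' z w := by
    show dihedralCastHom (dvd_mul_left q p) (z * w).left = _
    rw [SemidirectProduct.mul_left, map_mul, h.pi_phiG]

/-- The sign homomorphism `G_{p,q} → C₂`. -/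
def sgnHom (h : Hyp p q i) : Gpq h →* Multiplicative (ZMod 2) where
  toFun z := dihedralSgn (p * q) z.left
  map_one' := by simp
  map_mul' z w := by
    show dihedralSgn (p * q) (z * w).left = _
    rw [SemidirectProduct.mul_left, map_mul, h.sgn_phiG]

def fHom1 (h : Hyp p q i) : Gpq h →* Multiplicative (ZMod 2) × Multiplicative (ZMod q) :=
  (sgnHom h).prod SemidirectProduct.rightHom

def fHom3 (h : Hyp p q i) : Gpq h →* Multiplicative (ZMod q) × DihedralGroup q :=
  (SemidirectProduct.rightHom : Gpq h →* Multiplicative (ZMod q)).prod (piHom h)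

theorem piHom_surjective (h : Hyp p q i) : Function.Surjective (piHom h) := by
  haveI : NeZero q := ⟨h.hq.ne_zero⟩
  intro d
  cases d with
  | r j =>
    exact ⟨⟨DihedralGroup.r ((j.val : ℕ) : ZMod (p * q)), 1⟩, by
      show dihedralCastHom (dvd_mul_left q p) (DihedralGroup.r ((j.val : ℕ) : ZMod (p * q)))
        = DihedralGroup.r j
      rw [dihedralCastHom_r, map_natCast]
      exact congrArg _ (ZMod.natCast_rightInverse j)⟩
  | sr j =>
    exact ⟨⟨DihedralGroup.sr ((j.val : ℕ) : ZMod (p * q)), 1⟩, by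
      show dihedralCastHom (dvd_mul_left q p) (DihedralGroup.sr ((j.val : ℕ) : ZMod (p * q)))
        = DihedralGroup.sr j
      rw [dihedralCastHom_sr, map_natCast]
      exact congrArg _ (ZMod.natCast_rightInverse j)⟩

theorem fHom1_surjective (h : Hyp p q i) : Function.Surjective (fHom1 h) := by
  rintro ⟨s, m⟩
  have hs2 : s = 1 ∨ s = ofAdd 1 := by revert s; decide
  rcases hs2 with rfl | rfl
  · exact ⟨⟨DihedralGroup.r 0, m⟩, rfl⟩
  · exact ⟨⟨DihedralGroup.sr 0, m⟩, rfl⟩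

theorem fHom3_surjective (h : Hyp p q i) : Function.Surjective (fHom3 h) := by
  rintro ⟨m, d⟩
  obtain ⟨⟨x, y⟩, hx⟩ := piHom_surjective h d
  refine ⟨⟨x, m⟩, ?_⟩
  have : piHom h ⟨x, m⟩ = d := by
    show dihedralCastHom _ x = d
    exact hx
  exact Prod.ext rfl this

theorem ker_fHom1 (h : Hyp p q i) : NpqOneSub h = (fHom1 h).ker := by
  ext z
  constructor
  · rintro ⟨hz1, l, hl⟩
    rw [MonoidHom.mem_ker]
    refine Prod.ext ?_ hz1
    show dihedralSgn (p * q) z.left = 1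
    rw [hl]; rfl
  · intro hz
    rw [MonoidHom.mem_ker] at hz
    have hzs : sgnHom h z = 1 := congrArg Prod.fst hz
    have hzr : z.right = 1 := congrArg Prod.snd hz
    refine ⟨hzr, ?_⟩
    cases hx : z.left with
    | r l => exact ⟨l, rfl⟩
    | sr l =>
      exfalso
      have : dihedralSgn (p * q) z.left = 1 := hzs
      rw [hx] at this
      have h2 : (ofAdd (1 : ZMod 2)) = 1 := this
      exact absurd h2 (by decide)

theorem ker_fHom2 (h : Hyp p q i) : NpqTwoSub h = (piHom h).ker := by
  ext z
  rw [MonoidHom.mem_ker]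
  constructor
  · rintro ⟨s, hl⟩
    show dihedralCastHom _ z.left = 1
    rw [hl, dihedralCastHom_r, DihedralGroup.one_def]
    congr 1
    exact (cast_eq_zero_iff_exists h.hp.ne_zero h.hq.ne_zero _).mpr ⟨s, rfl⟩
  · intro hz
    have hz' : dihedralCastHom (dvd_mul_left q p) z.left = 1 := hz
    cases hx : z.left with
    | r l =>
      rw [hx, dihedralCastHom_r, DihedralGroup.one_def, DihedralGroup.r.injEq] at hz'
      obtain ⟨s, hs⟩ := (cast_eq_zero_iff_exists h.hp.ne_zero h.hq.ne_zero l).mp hz'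
      exact ⟨s, by simp only [hx, hs]⟩
    | sr l =>
      rw [hx, dihedralCastHom_sr, DihedralGroup.one_def] at hz'
      exact absurd hz' (by intro h; cases h)

theorem ker_fHom3 (h : Hyp p q i) : NpSub h = (fHom3 h).ker := by
  ext z
  rw [MonoidHom.mem_ker]
  constructor
  · rintro ⟨hz1, s, hl⟩
    refine Prod.ext hz1 ?_
    show dihedralCastHom _ z.left = 1
    rw [hl, dihedralCastHom_r, DihedralGroup.one_def]
    congr 1
    exact (cast_eq_zero_iff_exists h.hp.ne_zero h.hq.ne_zero _).mpr ⟨s, rfl⟩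
  · intro hz
    have hz1 : z.right = 1 := congrArg Prod.fst hz
    have hz2 : piHom h z = 1 := congrArg Prod.snd hz
    refine ⟨hz1, ?_⟩
    have hz' : dihedralCastHom (dvd_mul_left q p) z.left = 1 := hz2
    cases hx : z.left with
    | r l =>
      rw [hx, dihedralCastHom_r, DihedralGroup.one_def, DihedralGroup.r.injEq] at hz'
      obtain ⟨s, hs⟩ := (cast_eq_zero_iff_exists h.hp.ne_zero h.hq.ne_zero l).mp hz'
      exact ⟨s, by simp only [hx, hs]⟩
    | sr l =>
      rw [hx, dihedralCastHom_sr, DihedralGroup.one_def] at hz'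
      exact absurd hz' (by intro h; cases h)

end Mizerka

open Mizerka in
/-- `G_{p,q}/N¹_{pq} ≅ C_{2q}`, `G_{p,q}/N²_{pq} ≅ D_{2q}` and
`G_{p,q}/N_p ≅ C_q × D_{2q}`. -/
theorem statement_14 {p q i : ℕ} (h : Hyp p q i) :
    ∃ _h1 : (NpqOneSub h).Normal, ∃ _h2 : (NpqTwoSub h).Normal, ∃ _h3 : (NpSub h).Normal,
      haveI := _h1
      haveI := _h2
      haveI := _h3
      (Nonempty ((Gpq h ⧸ NpqOneSub h) ≃* Multiplicative (ZMod (2 * q))) ∧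
       Nonempty ((Gpq h ⧸ NpqTwoSub h) ≃* DihedralGroup q) ∧
       Nonempty ((Gpq h ⧸ NpSub h) ≃* (Multiplicative (ZMod q) × DihedralGroup q))) := by
  haveI : NeZero q := ⟨h.hq.ne_zero⟩
  have hk1 := ker_fHom1 h
  have hk2 := ker_fHom2 h
  have hk3 := ker_fHom3 h
  have n1 : (NpqOneSub h).Normal := hk1 ▸ MonoidHom.normal_ker _
  have n2 : (NpqTwoSub h).Normal := hk2 ▸ MonoidHom.normal_ker _
  have n3 : (NpSub h).Normal := hk3 ▸ MonoidHom.normal_ker _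
  have hq2 : (2 : ℕ) ≠ q := by have := Nat.odd_iff.mp h.hoddq; omega
  have hco : Nat.Coprime 2 q := (Nat.coprime_primes Nat.prime_two h.hq).mpr hq2
  have e1 : Multiplicative (ZMod 2) × Multiplicative (ZMod q) ≃* Multiplicative (ZMod (2 * q)) :=
    (MulEquiv.symm (MulEquiv.prodMultiplicative (G := ZMod 2) (H := ZMod q))).trans
      (MulEquiv.symm (AddEquiv.toMultiplicative (ZMod.chineseRemainder hco).toAddEquiv))
  refine ⟨n1, n2, n3, ⟨?_⟩, ⟨?_⟩, ⟨?_⟩⟩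
  · exact ((QuotientGroup.quotientMulEquivOfEq hk1).trans
      (QuotientGroup.quotientKerEquivOfSurjective _ (fHom1_surjective h))).trans e1
  · exact (QuotientGroup.quotientMulEquivOfEq hk2).trans
      (QuotientGroup.quotientKerEquivOfSurjective _ (piHom_surjective h))
  · exact (QuotientGroup.quotientMulEquivOfEq hk3).trans
      (QuotientGroup.quotientKerEquivOfSurjective _ (fHom3_surjective h))
end

section
/- The quotient group G_{p,q}/N_q, which has order 2pq, is not nilpotent and is not of prime power order. -/
open Multiplicative

namespace Mizerka

section Aux

variable {p q i : ℕ}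

/-- Underlying equiv of a semidirect product with the product type. -/
def sdpEquivProd {N G : Type*} [Group N] [Group G] (φ : G →* MulAut N) :
    (N ⋊[φ] G) ≃ N × G where
  toFun x := (x.left, x.right)
  invFun x := ⟨x.1, x.2⟩
  left_inv _ := rfl
  right_inv _ := rfl

theorem mult_p_iff (hp : 0 < p) (hq : 0 < q) (m : ZMod (p * q)) :
    (∃ s : ZMod (p * q), m = (p : ZMod (p * q)) * s) ↔
      ZMod.castHom (dvd_mul_right p q) (ZMod p) m = 0 := by
  haveI : NeZero (p * q) := ⟨Nat.mul_ne_zero hp.ne' hq.ne'⟩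
  haveI : NeZero p := ⟨hp.ne'⟩
  constructor
  · rintro ⟨s, rfl⟩
    rw [map_mul, map_natCast, ZMod.natCast_self, zero_mul]
  · intro hm
    have h1 : ((m.val : ℕ) : ZMod p) = 0 := by
      rw [← map_natCast (ZMod.castHom (dvd_mul_right p q) (ZMod p)),
        ZMod.natCast_rightInverse m, hm]
    rw [ZMod.natCast_eq_zero_iff] at h1
    obtain ⟨t, ht⟩ := h1
    refine ⟨(t : ZMod (p * q)), ?_⟩
    have h2 : ((m.val : ℕ) : ZMod (p * q)) = m := ZMod.natCast_rightInverse m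
    rw [← h2, ht]
    push_cast
    ring

theorem sr_inv (n : ℕ) (j : ZMod n) : (DihedralGroup.sr j)⁻¹ = DihedralGroup.sr j := by
  rw [eq_comm, eq_inv_iff_mul_eq_one, DihedralGroup.sr_mul_self]

theorem r_pow_n (n : ℕ) [NeZero n] (m : ZMod n) : (DihedralGroup.r m) ^ n = 1 := by
  have h1 : DihedralGroup.r m = (DihedralGroup.r 1 : DihedralGroup n) ^ (m.val) := by
    rw [DihedralGroup.r_one_pow, ZMod.natCast_rightInverse m]
  rw [h1, ← pow_mul, mul_comm, pow_mul, DihedralGroup.r_one_pow_n, one_pow]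

theorem NqSub_normal (h : Hyp p q i) : (NqSub h).Normal := by
  constructor
  rintro n ⟨hn1, s, hn2⟩ g
  constructor
  · rw [SemidirectProduct.mul_right, SemidirectProduct.mul_right,
      SemidirectProduct.inv_right, hn1, mul_one, mul_inv_cancel]
  · rw [SemidirectProduct.mul_left, SemidirectProduct.mul_left, SemidirectProduct.mul_right,
      SemidirectProduct.inv_left, hn1, hn2, mul_one, h.phiG_r]
    have hsimp : h.phiG g.right (h.phiG g.right⁻¹ g.left⁻¹) = g.left⁻¹ := by simp
    rw [hsimp]
    set u : ZMod (p * q) := ((h.unit ^ (toAdd g.right).val : (ZMod (p * q))ˣ) : ZMod (p * q))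
    rcases hg : g.left with j | j
    · refine ⟨u * s, ?_⟩
      rw [r_inv, DihedralGroup.r_mul_r, DihedralGroup.r_mul_r]
      congr 1
      ring
    · refine ⟨-(u * s), ?_⟩
      rw [sr_inv, DihedralGroup.sr_mul_r, DihedralGroup.sr_mul_sr]
      congr 1
      ring

theorem card_NqSub (h : Hyp p q i) : Nat.card (NqSub h) = q := by
  haveI : NeZero (p * q) := ⟨Nat.mul_ne_zero h.hp.pos.ne' h.hq.pos.ne'⟩
  haveI : NeZero q := ⟨h.hq.pos.ne'⟩
  have hf : Function.Bijective (fun s : ZMod q =>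
      (⟨⟨DihedralGroup.r ((p : ZMod (p * q)) * ((s.val : ℕ) : ZMod (p * q))), 1⟩,
        rfl, ((s.val : ℕ) : ZMod (p * q)), rfl⟩ : NqSub h)) := by
    constructor
    · intro s₁ s₂ hs
      have h1 : DihedralGroup.r ((p : ZMod (p * q)) * ((s₁.val : ℕ) : ZMod (p * q)))
          = DihedralGroup.r ((p : ZMod (p * q)) * ((s₂.val : ℕ) : ZMod (p * q))) := by
        have := congrArg (fun x : NqSub h => (x : Gpq h).left) hs
        simpa using this
      have h2 : (((p * s₁.val : ℕ)) : ZMod (p * q)) = ((p * s₂.val : ℕ) : ZMod (p * q)) := by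
        push_cast
        exact DihedralGroup.r.inj h1
      have h3 : (p * s₁.val) ≡ (p * s₂.val) [MOD p * q] :=
        (ZMod.natCast_eq_natCast_iff _ _ _).mp h2
      have h4 : s₁.val ≡ s₂.val [MOD (p * q) / Nat.gcd (p * q) p] :=
        h3.cancel_left_div_gcd (Nat.mul_pos h.hp.pos h.hq.pos)
      have hgcd : Nat.gcd (p * q) p = p := by
        rw [Nat.gcd_comm]
        exact Nat.gcd_eq_left (dvd_mul_right p q)
      rw [hgcd, Nat.mul_div_cancel_left q h.hp.pos] at h4
      have h5 : ((s₁.val : ℕ) : ZMod q) = ((s₂.val : ℕ) : ZMod q) :=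
        (ZMod.natCast_eq_natCast_iff _ _ _).mpr h4
      rwa [ZMod.natCast_rightInverse s₁, ZMod.natCast_rightInverse s₂] at h5
    · rintro ⟨x, hx1, s, hx2⟩
      refine ⟨((s.val : ℕ) : ZMod q), ?_⟩
      apply Subtype.ext
      apply SemidirectProduct.ext
      · show DihedralGroup.r _ = x.left
        rw [hx2]
        congr 1
        rw [ZMod.val_natCast]
        have h6 : (p * (s.val % q)) ≡ (p * s.val) [MOD p * q] :=
          (Nat.mod_modEq s.val q).mul_left' p
        have h7 : ((p * (s.val % q) : ℕ) : ZMod (p * q)) = ((p * s.val : ℕ) : ZMod (p * q)) :=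
          (ZMod.natCast_eq_natCast_iff _ _ _).mpr h6
        push_cast at h7
        rw [h7, ZMod.natCast_rightInverse s]
      · exact hx1.symm
  rw [Nat.card_congr (Equiv.ofBijective _ hf).symm, Nat.card_zmod]

theorem card_Gpq (h : Hyp p q i) : Nat.card (Gpq h) = 2 * (p * q) * q := by
  haveI : NeZero q := ⟨h.hq.pos.ne'⟩
  rw [Nat.card_congr (sdpEquivProd h.phiG), Nat.card_prod, DihedralGroup.nat_card,
    Nat.card_congr Multiplicative.toAdd, Nat.card_zmod]

end Aux

end Mizerka


open Mizerka in
/-- The quotient `G_{p,q}/N_q`, of order `2pq`, is not nilpotent and is not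
of prime power order. -/
theorem statement_15 {p q i : ℕ} (h : Hyp p q i) :
    ∃ _hN : (NqSub h).Normal,
      haveI := _hN
      (Nat.card (Gpq h ⧸ NqSub h) = 2 * p * q ∧
       ¬ Group.IsNilpotent (Gpq h ⧸ NqSub h) ∧
       ¬ ∃ ℓ k : ℕ, Nat.Prime ℓ ∧ Nat.card (Gpq h ⧸ NqSub h) = ℓ ^ k) := by
  haveI hN : (NqSub h).Normal := NqSub_normal h
  haveI : NeZero (p * q) := ⟨Nat.mul_ne_zero h.hp.pos.ne' h.hq.pos.ne'⟩
  haveI : NeZero q := ⟨h.hq.pos.ne'⟩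
  haveI : NeZero p := ⟨h.hp.pos.ne'⟩
  haveI : Finite (Gpq h) := Finite.of_equiv _ (sdpEquivProd h.phiG).symm
  have hp2 : p ≠ 2 := by rcases h.hoddp with ⟨k, hk⟩; omega
  have hcard : Nat.card (Gpq h ⧸ NqSub h) = 2 * p * q := by
    have h1 := Subgroup.card_eq_card_quotient_mul_card_subgroup (NqSub h)
    rw [card_Gpq h, card_NqSub h] at h1
    have h2 : Nat.card (Gpq h ⧸ NqSub h) * q = (2 * p * q) * q := by rw [← h1]; ring
    exact Nat.eq_of_mul_eq_mul_right h.hq.pos h2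
  refine ⟨hN, hcard, ?_, ?_⟩
  · intro hnil
    haveI : Fact (Nat.Prime 2) := ⟨Nat.prime_two⟩
    have hsylow := ((isNilpotent_of_finite_tfae (G := Gpq h ⧸ NqSub h)).out 0 3).mp hnil
    obtain ⟨P⟩ : Nonempty (Sylow 2 (Gpq h ⧸ NqSub h)) := inferInstance
    have hPn : (P : Subgroup (Gpq h ⧸ NqSub h)).Normal := hsylow 2 ⟨Nat.prime_two⟩ P
    haveI := Sylow.unique_of_normal P hPn
    set π : Gpq h →* Gpq h ⧸ NqSub h := QuotientGroup.mk' (NqSub h) with hπ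
    have hmem : ∀ w : Gpq h, w * w = 1 → π w ∈ (P : Subgroup (Gpq h ⧸ NqSub h)) := by
      intro w hw
      have hx2 : (π w) ^ 2 = 1 := by rw [pow_two, ← map_mul, hw, map_one]
      have hPG : IsPGroup 2 (Subgroup.zpowers (π w)) := by
        intro g
        refine ⟨1, ?_⟩
        obtain ⟨n, hn⟩ := g.2
        have hg2 : (g : Gpq h ⧸ NqSub h) ^ (2 : ℕ) = 1 := by
          rw [← hn, ← zpow_natCast, ← zpow_mul, mul_comm n ((2:ℕ):ℤ), zpow_mul, zpow_natCast, hx2, one_zpow]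
        apply Subtype.ext
        rw [pow_one]
        exact_mod_cast hg2
      obtain ⟨P', hP'⟩ := hPG.exists_le_sylow
      have hPP : P' = P := Subsingleton.elim _ _
      rw [hPP] at hP'
      exact hP' (Subgroup.mem_zpowers _)
    have hb : bG h * bG h = 1 := by
      show SemidirectProduct.inl (DihedralGroup.sr 0) *
        SemidirectProduct.inl (DihedralGroup.sr 0) = 1
      rw [← map_mul, DihedralGroup.sr_mul_self, map_one]
    have hg2eq : aG h * bG h * (aG h)⁻¹
        = SemidirectProduct.inl (DihedralGroup.sr (-2)) := by
      show SemidirectProduct.inl (DihedralGroup.r 1) * SemidirectProduct.inl (DihedralGroup.sr 0)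
        * (SemidirectProduct.inl (DihedralGroup.r 1))⁻¹ = _
      rw [← map_inv, ← map_mul, ← map_mul, r_inv, DihedralGroup.r_mul_sr, DihedralGroup.sr_mul_r]
      norm_num
    have hg2sq : (aG h * bG h * (aG h)⁻¹) * (aG h * bG h * (aG h)⁻¹) = 1 := by
      rw [hg2eq, ← map_mul, DihedralGroup.sr_mul_self, map_one]
    have hxP := hmem (bG h) hb
    have hyP := hmem _ hg2sq
    have hzP : π ((aG h * bG h * (aG h)⁻¹) * bG h) ∈ (P : Subgroup (Gpq h ⧸ NqSub h)) := by
      rw [map_mul]; exact mul_mem hyP hxP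
    have hz : (aG h * bG h * (aG h)⁻¹) * bG h
        = SemidirectProduct.inl (DihedralGroup.r 2) := by
      rw [hg2eq]
      show SemidirectProduct.inl _ * SemidirectProduct.inl (DihedralGroup.sr 0) = _
      rw [← map_mul, DihedralGroup.sr_mul_sr]
      norm_num
    have hzpow : (π ((aG h * bG h * (aG h)⁻¹) * bG h)) ^ (p * q) = 1 := by
      rw [← map_pow, hz, ← map_pow, r_pow_n, map_one, map_one]
    obtain ⟨k, hk⟩ := P.isPGroup' ⟨π ((aG h * bG h * (aG h)⁻¹) * bG h), hzP⟩
    have hk' : (π ((aG h * bG h * (aG h)⁻¹) * bG h)) ^ (2 ^ k) = 1 := by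
      have := congrArg (fun x : (P : Subgroup (Gpq h ⧸ NqSub h)) => (x : Gpq h ⧸ NqSub h)) hk
      simpa using this
    have hd1 := orderOf_dvd_of_pow_eq_one hk'
    have hd2 := orderOf_dvd_of_pow_eq_one hzpow
    have hcop : Nat.Coprime (2 ^ k) (p * q) :=
      Nat.Coprime.pow_left k (Nat.coprime_two_left.mpr (h.hoddp.mul h.hoddq))
    have ho1 : orderOf (π ((aG h * bG h * (aG h)⁻¹) * bG h)) = 1 :=
      Nat.dvd_one.mp (hcop ▸ Nat.dvd_gcd hd1 hd2)
    have hmemN : SemidirectProduct.inl (DihedralGroup.r 2) ∈ NqSub h := by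
      rw [← hz]
      exact (QuotientGroup.eq_one_iff _).mp (orderOf_eq_one_iff.mp ho1)
    obtain ⟨-, s, hs⟩ := hmemN
    have h2eq : (2 : ZMod (p * q)) = (p : ZMod (p * q)) * s := by
      have := hs
      simp only [SemidirectProduct.left_inl] at this
      exact DihedralGroup.r.inj this
    have hc0 := (mult_p_iff h.hp.pos h.hq.pos _).mp ⟨s, h2eq⟩
    rw [map_ofNat] at hc0
    have hdvd2 : p ∣ 2 := by
      have h2n : ((2 : ℕ) : ZMod p) = 0 := by exact_mod_cast hc0
      exact (ZMod.natCast_eq_zero_iff 2 p).mp h2n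
    have := Nat.le_of_dvd (by norm_num) hdvd2
    have := h.hp.two_le
    omega
  · rintro ⟨ℓ, k, hℓ, hcard'⟩
    rw [hcard] at hcard'
    have hd2 : (2 : ℕ) ∣ ℓ ^ k := ⟨p * q, by rw [← hcard']; ring⟩
    have hdp : p ∣ ℓ ^ k := ⟨2 * q, by rw [← hcard']; ring⟩
    have h2ℓ : 2 = ℓ :=
      (Nat.prime_dvd_prime_iff_eq Nat.prime_two hℓ).mp (Nat.Prime.dvd_of_dvd_pow Nat.prime_two hd2)
    have hpℓ : p = ℓ :=
      (Nat.prime_dvd_prime_iff_eq h.hp hℓ).mp (Nat.Prime.dvd_of_dvd_pow h.hp hdp)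
    exact hp2 (by omega)
end
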